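/- Let R ≅ R_1 × ⋯ × R_m, m ≥ 2, each R_i a principal ideal non-field ring with n_i nontrivial ideals forming a chain. Then the independence number of the strong resolving graph of In(R) equals (n_1 + ⋯ + n_m) + m − 1. -/

import Mathlib

open SimpleGraph Finset

variable {V : Type*}

/-- A set of vertices is resolving if distance vectors to it distinguish vertices. -/
def IsResolving (G : SimpleGraph V) (S : Set V) : Prop :=
  ∀ u v : V, (∀ w ∈ S, G.dist u w = G.dist v w) → u = v

/-- The metric dimension: the least size of a (finite) resolving set. -/
noncomputable def metricDim (G : SimpleGraph V) : ℕ :=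
  sInf {k | ∃ S : Finset V, S.card = k ∧ IsResolving G ↑S}

/-- Two vertices are mutually maximally distant. -/
def MMD (G : SimpleGraph V) (u v : V) : Prop :=
  u ≠ v ∧ (∀ w, G.Adj u w → G.dist v w ≤ G.dist u v) ∧
    (∀ w, G.Adj v w → G.dist u w ≤ G.dist u v)

/-- The strong resolving graph: edges between mutually maximally distant vertices. -/
def strongResolvingGraph (G : SimpleGraph V) : SimpleGraph V where
  Adj u v := MMD G u v
  symm := by
    constructor
    rintro u v ⟨hne, h1, h2⟩
    refine ⟨hne.symm, ?_, ?_⟩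
    · intro w hw
      rw [SimpleGraph.dist_comm (u := v) (v := u)]
      exact h2 w hw
    · intro w hw
      rw [SimpleGraph.dist_comm (u := v) (v := u)]
      exact h1 w hw
  loopless := ⟨fun v h => h.1 rfl⟩

/-- A set strongly resolving a graph. -/
def IsStrongResolving (G : SimpleGraph V) (S : Set V) : Prop :=
  ∀ u v : V, u ≠ v → ∃ w ∈ S,
    G.dist w u = G.dist w v + G.dist v u ∨ G.dist w v = G.dist w u + G.dist u v

/-- Strong metric dimension. -/
noncomputable def sdim (G : SimpleGraph V) : ℕ :=
  sInf {k | ∃ S : Finset V, S.card = k ∧ IsStrongResolving G ↑S}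

/-- An independent set of vertices. -/
def IsIndepFinset (G : SimpleGraph V) (S : Finset V) : Prop :=
  ∀ u ∈ S, ∀ v ∈ S, u ≠ v → ¬ G.Adj u v

/-- Independence number. -/
noncomputable def indepNum (G : SimpleGraph V) : ℕ :=
  sSup {k | ∃ S : Finset V, S.card = k ∧ IsIndepFinset G S}

/-- Vertices of the inclusion graph on `{1,...,n}`: nonempty proper subsets. -/
def SubVert (n : ℕ) := {A : Finset (Fin n) // A.Nonempty ∧ A ≠ Finset.univ}

/-- The inclusion graph on nonempty proper subsets of `{1,...,n}`. -/
def inclGraph (n : ℕ) : SimpleGraph (SubVert n) where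
  Adj A B := A.1 ⊂ B.1 ∨ B.1 ⊂ A.1
  symm := ⟨fun _ _ h => h.symm⟩
  loopless := ⟨fun A h => by
    rcases h with h | h <;> exact (ssubset_irrefl A.1) h⟩

/-- Complement of a vertex of the inclusion graph. -/
def complVert {n : ℕ} (A : SubVert n) : SubVert n :=
  ⟨A.1ᶜ,
    Finset.nonempty_iff_ne_empty.mpr fun h => A.2.2 (by simpa using h),
    fun h => (Finset.nonempty_iff_ne_empty.mp A.2.1) (by simpa using h)⟩

/-- Vertices of the inclusion ideal graph of a product of chain rings:
tuples in a product of chains, excluding bottom and top. -/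
def ChainVert {m : ℕ} (d : Fin m → ℕ) := {v : ∀ i, Fin (d i + 2) // v ≠ ⊥ ∧ v ≠ ⊤}

/-- The inclusion graph on a product of chains (minus bottom and top),
modelling the inclusion ideal graph of a product of principal ideal rings. -/
def chainGraph {m : ℕ} (d : Fin m → ℕ) : SimpleGraph (ChainVert d) where
  Adj I J := I.1 < J.1 ∨ J.1 < I.1
  symm := ⟨fun _ _ h => h.symm⟩
  loopless := ⟨fun I h => by rcases h with h | h <;> exact lt_irrefl _ h⟩

section Stmt18Aux

open SimpleGraph

variable {m : ℕ} {d : Fin m → ℕ}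

/-- extreme tuples: every coordinate is 0 or top -/
def SExt (v : ∀ i, Fin (d i + 2)) : Prop := ∀ i, v i = 0 ∨ v i = Fin.last _

/-- coordinatewise complement -/
def scpl (v : ∀ i, Fin (d i + 2)) : ∀ i, Fin (d i + 2) := fun i => (v i).rev

/-- comparability -/
def scomp (u v : ∀ i, Fin (d i + 2)) : Prop := u ≤ v ∨ v ≤ u

/-- complementary extreme pair -/
def CPair (u v : ∀ i, Fin (d i + 2)) : Prop := SExt u ∧ v = scpl u

@[simp] lemma sbot_app (i : Fin m) : (⊥ : ∀ i, Fin (d i + 2)) i = 0 := by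
  simp [Fin.bot_eq_zero]

@[simp] lemma stop_app (i : Fin m) : (⊤ : ∀ i, Fin (d i + 2)) i = Fin.last _ := by
  simp [Fin.top_eq_last]

lemma slast_ne_zero (i : Fin m) : (Fin.last (d i + 1)) ≠ 0 := by
  simp [Fin.ext_iff]

lemma sne_bot_iff {v : ∀ i, Fin (d i + 2)} : v ≠ ⊥ ↔ ∃ i, v i ≠ 0 := by
  rw [Function.ne_iff]; simp [Fin.bot_eq_zero]

lemma sne_top_iff {v : ∀ i, Fin (d i + 2)} : v ≠ ⊤ ↔ ∃ i, v i ≠ Fin.last _ := by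
  rw [Function.ne_iff]; simp [Fin.top_eq_last]

lemma scpl_scpl (v : ∀ i, Fin (d i + 2)) : scpl (scpl v) = v :=
  funext fun i => Fin.rev_rev _

lemma scpl_app_eq_zero {v : ∀ i, Fin (d i + 2)} {i : Fin m} :
    scpl v i = 0 ↔ v i = Fin.last _ := by
  unfold scpl
  constructor
  · intro h
    have := congrArg Fin.rev h
    rw [Fin.rev_rev] at this
    rw [this, Fin.rev_zero]
  · intro h; rw [h, Fin.rev_last]

lemma scpl_app_eq_last {v : ∀ i, Fin (d i + 2)} {i : Fin m} :
    scpl v i = Fin.last _ ↔ v i = 0 := by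
  unfold scpl
  constructor
  · intro h
    have := congrArg Fin.rev h
    rw [Fin.rev_rev] at this
    rw [this, Fin.rev_last]
  · intro h; rw [h, Fin.rev_zero]

lemma scpl_eq_bot {v : ∀ i, Fin (d i + 2)} : scpl v = ⊥ ↔ v = ⊤ := by
  constructor
  · intro h
    funext i
    have := congrFun h i
    simp only [sbot_app] at this
    simpa [scpl_app_eq_zero, Fin.top_eq_last] using this
  · intro h; subst h; funext i; simp [scpl, Fin.rev_last]

lemma scpl_eq_top {v : ∀ i, Fin (d i + 2)} : scpl v = ⊤ ↔ v = ⊥ := by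
  constructor
  · intro h
    funext i
    have := congrFun h i
    simp only [stop_app] at this
    simpa [scpl_app_eq_last, Fin.bot_eq_zero] using this
  · intro h; subst h; funext i; simp [scpl, Fin.rev_zero]

lemma le_scpl_comm {u v : ∀ i, Fin (d i + 2)} : u ≤ scpl v ↔ v ≤ scpl u := by
  constructor <;> intro h i <;> exact Fin.le_rev_iff.mp (h i)

lemma scpl_le_scpl {u v : ∀ i, Fin (d i + 2)} : scpl u ≤ scpl v ↔ v ≤ u := by
  constructor
  · intro h i; exact Fin.rev_le_rev.mp (h i)
  · intro h i; exact Fin.rev_le_rev.mpr (h i)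

lemma sext_scpl {v : ∀ i, Fin (d i + 2)} (h : SExt v) : SExt (scpl v) := by
  intro i
  rcases h i with h' | h'
  · right; rw [scpl_app_eq_last]; exact h'
  · left; rw [scpl_app_eq_zero]; exact h'

lemma scpl_le_comm {u v : ∀ i, Fin (d i + 2)} : scpl u ≤ v ↔ scpl v ≤ u := by
  constructor <;> intro h i <;> exact Fin.rev_le_iff.mp (h i)

lemma scomp_scpl_comm {u v : ∀ i, Fin (d i + 2)} :
    scomp u (scpl v) ↔ scomp v (scpl u) := by
  unfold scomp
  rw [le_scpl_comm, scpl_le_comm]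

lemma exists_lt_coord {u v : ∀ i, Fin (d i + 2)} (h : u < v) : ∃ i, u i < v i := by
  obtain ⟨hle, hne⟩ := lt_iff_le_and_ne.mp h
  obtain ⟨i, hi⟩ := Function.ne_iff.mp hne
  exact ⟨i, lt_of_le_of_ne (hle i) hi⟩

/-- adjacency characterisation -/
lemma chain_adj_iff {I J : ChainVert d} :
    (chainGraph d).Adj I J ↔ I.1 ≠ J.1 ∧ scomp I.1 J.1 := by
  show (I.1 < J.1 ∨ J.1 < I.1) ↔ _
  constructor
  · rintro (h | h)
    · exact ⟨ne_of_lt h, Or.inl h.le⟩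
    · exact ⟨(ne_of_lt h).symm, Or.inr h.le⟩
  · rintro ⟨hne, h | h⟩
    · exact Or.inl (lt_of_le_of_ne h hne)
    · exact Or.inr (lt_of_le_of_ne h (Ne.symm hne))

lemma vert_ne_iff {I J : ChainVert d} : I ≠ J ↔ I.1 ≠ J.1 := by
  constructor
  · intro h h'; exact h (Subtype.ext h')
  · intro h h'; exact h (congrArg Subtype.val h')

/-- if the meet is bottom and the join is top, the two tuples form a complementary
extreme pair -/
lemma cpair_of_meet_join {u v : ∀ i, Fin (d i + 2)}
    (hm : ∀ i, min (u i) (v i) = 0) (hj : ∀ i, max (u i) (v i) = Fin.last _) :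
    SExt u ∧ v = scpl u := by
  have key : ∀ i, (u i = 0 ∧ v i = Fin.last _) ∨ (u i = Fin.last _ ∧ v i = 0) := by
    intro i
    have h1 := hm i
    have h2 := hj i
    rcases le_total (u i) (v i) with h | h
    · rw [min_eq_left h] at h1
      rw [max_eq_right h] at h2
      exact Or.inl ⟨h1, h2⟩
    · rw [min_eq_right h] at h1
      rw [max_eq_left h] at h2
      exact Or.inr ⟨h2, h1⟩
  constructor
  · intro i
    rcases key i with ⟨h, _⟩ | ⟨h, _⟩
    · exact Or.inl h
    · exact Or.inr h
  · funext i
    rcases key i with ⟨h1, h2⟩ | ⟨h1, h2⟩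
    · rw [h2]; rw [Eq.comm, scpl_app_eq_last]; exact h1
    · rw [h2]; rw [Eq.comm, scpl_app_eq_zero]; exact h1

/-- existence of a common neighbour -/
lemma exists_common_nbr {I J : ChainVert d}
    (hnc : ¬ scomp I.1 J.1) (hcp : ¬ CPair I.1 J.1) :
    ∃ x : ChainVert d, (chainGraph d).Adj I x ∧ (chainGraph d).Adj x J := by
  classical
  by_cases hmeet : (fun i => min (I.1 i) (J.1 i)) = ⊥
  · -- use join
    have hjoin : (fun i => max (I.1 i) (J.1 i)) ≠ ⊤ := by
      intro h
      apply hcp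
      exact ⟨(cpair_of_meet_join (fun i => congrFun hmeet i) (fun i => congrFun h i)).1,
        (cpair_of_meet_join (fun i => congrFun hmeet i) (fun i => congrFun h i)).2⟩
    set q : ∀ i, Fin (d i + 2) := fun i => max (I.1 i) (J.1 i) with hq
    have hqI : I.1 ≤ q := fun i => le_max_left _ _
    have hqJ : J.1 ≤ q := fun i => le_max_right _ _
    have hqneI : q ≠ I.1 := by
      intro h
      apply hnc
      right
      intro i
      have := congrFun h i
      calc J.1 i ≤ q i := hqJ i
        _ = I.1 i := this
    have hqneJ : q ≠ J.1 := by
      intro h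
      apply hnc
      left
      intro i
      have := congrFun h i
      calc I.1 i ≤ q i := hqI i
        _ = J.1 i := this
    have hqbot : q ≠ ⊥ := by
      intro h
      apply hqneI
      apply le_antisymm
      · rw [h]; exact bot_le
      · exact hqI
    refine ⟨⟨q, hqbot, hjoin⟩, ?_, ?_⟩
    · exact Or.inl (lt_of_le_of_ne hqI (Ne.symm hqneI))
    · exact Or.inr (lt_of_le_of_ne hqJ (Ne.symm hqneJ))
  · set p : ∀ i, Fin (d i + 2) := fun i => min (I.1 i) (J.1 i) with hp
    have hpI : p ≤ I.1 := fun i => min_le_left _ _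
    have hpJ : p ≤ J.1 := fun i => min_le_right _ _
    have hpneI : p ≠ I.1 := by
      intro h
      apply hnc
      left
      intro i
      have := congrFun h i
      calc I.1 i = p i := this.symm
        _ ≤ J.1 i := hpJ i
    have hpneJ : p ≠ J.1 := by
      intro h
      apply hnc
      right
      intro i
      have := congrFun h i
      calc J.1 i = p i := this.symm
        _ ≤ I.1 i := hpI i
    have hptop : p ≠ ⊤ := by
      intro h
      apply hpneI
      apply le_antisymm hpI
      rw [h]; exact le_top
    refine ⟨⟨p, hmeet, hptop⟩, ?_, ?_⟩
    · exact Or.inr (lt_of_le_of_ne hpI hpneI)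
    · exact Or.inl (lt_of_le_of_ne hpJ hpneJ)

lemma dist_le_two {I J : ChainVert d}
    (hnc : ¬ scomp I.1 J.1) (hcp : ¬ CPair I.1 J.1) :
    (chainGraph d).dist I J ≤ 2 := by
  obtain ⟨x, h1, h2⟩ := exists_common_nbr hnc hcp
  have := SimpleGraph.dist_le (SimpleGraph.Walk.cons h1 (SimpleGraph.Walk.cons h2 SimpleGraph.Walk.nil))
  simpa using this

lemma reach_of_incomp {I J : ChainVert d}
    (hnc : ¬ scomp I.1 J.1) (hcp : ¬ CPair I.1 J.1) :
    (chainGraph d).Reachable I J := by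
  obtain ⟨x, h1, h2⟩ := exists_common_nbr hnc hcp
  exact (SimpleGraph.Walk.cons h1 (SimpleGraph.Walk.cons h2 SimpleGraph.Walk.nil)).reachable

lemma dist_eq_two {I J : ChainVert d}
    (hnc : ¬ scomp I.1 J.1) (hcp : ¬ CPair I.1 J.1) :
    (chainGraph d).dist I J = 2 := by
  have h2 := dist_le_two hnc hcp
  have hne : I ≠ J := by
    rw [vert_ne_iff]
    intro h
    exact hnc (Or.inl (le_of_eq h))
  have h0 : (chainGraph d).dist I J ≠ 0 := by
    rw [SimpleGraph.dist_ne_zero_iff_ne_and_reachable]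
    exact ⟨hne, reach_of_incomp hnc hcp⟩
  have h1 : (chainGraph d).dist I J ≠ 1 := by
    rw [ne_eq, SimpleGraph.dist_eq_one_iff_adj, chain_adj_iff]
    rintro ⟨_, hc⟩
    exact hnc hc
  omega

end Stmt18Aux


section Stmt18Aux2

open SimpleGraph

variable {m : ℕ} {d : Fin m → ℕ}

lemma sext_ne_scpl {u : ∀ i, Fin (d i + 2)} (hext : SExt u) (hu : u ≠ ⊥) :
    u ≠ scpl u := by
  obtain ⟨i, hi⟩ := sne_bot_iff.mp hu
  have hil : u i = Fin.last _ := (hext i).resolve_left hi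
  intro h
  have := congrFun h i
  rw [hil, scpl_app_eq_zero.mpr hil] at this
  exact slast_ne_zero i this

lemma sext_incomp_scpl {u : ∀ i, Fin (d i + 2)} (hext : SExt u)
    (hb : u ≠ ⊥) (ht : u ≠ ⊤) : ¬ scomp u (scpl u) := by
  obtain ⟨i, hi⟩ := sne_bot_iff.mp hb
  obtain ⟨j, hj⟩ := sne_top_iff.mp ht
  have hilast : u i = Fin.last _ := (hext i).resolve_left hi
  have hj0 : u j = 0 := (hext j).resolve_right hj
  rintro (h | h)
  · have := h i
    rw [hilast] at this
    rw [scpl_app_eq_zero.mpr hilast] at this  -- fails? scpl u i = 0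
    exact slast_ne_zero i (le_antisymm this (Fin.zero_le _))
  · have := h j
    rw [hj0] at this
    rw [scpl_app_eq_last.mpr hj0] at this
    exact slast_ne_zero j (le_antisymm this (Fin.zero_le _))

lemma no_common_nbr_cpair {I J : ChainVert d} (hext : SExt I.1)
    (hJ : J.1 = scpl I.1) (x : ChainVert d) :
    ¬ ((chainGraph d).Adj I x ∧ (chainGraph d).Adj x J) := by
  rintro ⟨h1, h2⟩
  have hinc : ¬ scomp I.1 J.1 := by
    rw [hJ]; exact sext_incomp_scpl hext I.2.1 I.2.2
  rcases h1 with h1 | h1 <;> rcases h2 with h2 | h2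
  · -- I < x, x < J : I < J
    exact hinc (Or.inl (le_of_lt (lt_trans h1 h2)))
  · -- I < x, J < x : x ≥ join = ⊤
    apply x.2.2
    funext i
    have hI := h1.le i
    have hJ2 := h2.le i
    rw [hJ] at hJ2
    simp only [stop_app]
    rcases hext i with h0 | hl
    · have : scpl I.1 i = Fin.last _ := scpl_app_eq_last.mpr h0
      rw [this] at hJ2
      exact le_antisymm (Fin.le_last _) hJ2
    · rw [hl] at hI
      exact le_antisymm (Fin.le_last _) hI
  · -- x < I, x < J : x ≤ meet = ⊥
    apply x.2.1
    funext i
    have hI := h1.le i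
    have hJ2 := h2.le i
    rw [hJ] at hJ2
    simp only [sbot_app]
    rcases hext i with h0 | hl
    · rw [h0] at hI
      exact le_antisymm hI (Fin.zero_le _)
    · have : scpl I.1 i = 0 := scpl_app_eq_zero.mpr hl
      rw [this] at hJ2
      exact le_antisymm hJ2 (Fin.zero_le _)
  · -- x < I, J < x : J < I
    exact hinc (Or.inr (le_of_lt (lt_trans h2 h1)))

lemma one_lt_last (hd1 : ∀ i, 1 ≤ d i) (i : Fin m) :
    (1 : Fin (d i + 2)) < Fin.last (d i + 1) := by
  rw [Fin.lt_def]
  have := hd1 i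
  simp only [Fin.val_one, Fin.val_last]
  omega

/-- the middle vertex used for paths out of an extreme vertex -/
lemma exists_path3 (hd1 : ∀ i, 1 ≤ d i) {I J : ChainVert d} (hext : SExt I.1)
    (hJ : J.1 = scpl I.1) :
    ∃ w x : ChainVert d, (chainGraph d).Adj I w ∧ (chainGraph d).Adj w x ∧
      (chainGraph d).Adj x J := by
  classical
  obtain ⟨i, hi⟩ := sne_bot_iff.mp I.2.1
  obtain ⟨j, hj⟩ := sne_top_iff.mp I.2.2
  have hilast : I.1 i = Fin.last _ := (hext i).resolve_left hi
  have hj0 : I.1 j = 0 := (hext j).resolve_right hj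
  have hij : i ≠ j := by
    intro h; rw [h, hj0] at hilast; exact slast_ne_zero j hilast.symm
  set w : ∀ i', Fin (d i' + 2) := Function.update I.1 i 1 with hw
  have hwi : w i = 1 := Function.update_self _ _ _
  have hwj : w j = 0 := by
    rw [hw, Function.update_of_ne (Ne.symm hij)]; exact hj0
  have hwb : w ≠ ⊥ := by
    rw [sne_bot_iff]; exact ⟨i, by rw [hwi]; simp⟩
  have hwt : w ≠ ⊤ := by
    rw [sne_top_iff]
    refine ⟨j, by rw [hwj]; exact (slast_ne_zero j).symm⟩
  have hwlt : w < I.1 := by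
    constructor
    · intro i'
      by_cases h : i' = i
      · rw [h, hwi, hilast]; exact (one_lt_last hd1 i).le
      · rw [hw, Function.update_of_ne h]
    · intro hle
      have := hle i
      rw [hwi, hilast] at this
      exact absurd (le_antisymm this (one_lt_last hd1 i).le)
        (ne_of_lt (one_lt_last hd1 i)).symm
  have hwext : ¬ SExt w := by
    intro h
    rcases h i with h' | h' <;> rw [hwi] at h'
    · exact absurd h' (by simp)
    · exact absurd h' (ne_of_lt (one_lt_last hd1 i))
  have hwJ : ¬ scomp w J.1 := by
    rw [hJ]
    rintro (h | h)
    · have := h i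
      rw [hwi, scpl_app_eq_zero.mpr hilast] at this
      simp [Fin.le_def] at this
    · have := h j
      rw [hwj, scpl_app_eq_last.mpr hj0] at this
      exact slast_ne_zero j (le_antisymm this (Fin.zero_le _))
  have hcp : ¬ CPair w J.1 := fun h => hwext h.1
  obtain ⟨x, hx1, hx2⟩ :=
    exists_common_nbr (I := (⟨w, hwb, hwt⟩ : ChainVert d)) (J := J) hwJ hcp
  exact ⟨⟨w, hwb, hwt⟩, x, Or.inr hwlt, hx1, hx2⟩

lemma dist_eq_three (hd1 : ∀ i, 1 ≤ d i) {I J : ChainVert d} (hext : SExt I.1)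
    (hJ : J.1 = scpl I.1) : (chainGraph d).dist I J = 3 := by
  obtain ⟨w, x, h1, h2, h3⟩ := exists_path3 hd1 hext hJ
  have hle : (chainGraph d).dist I J ≤ 3 := by
    have := SimpleGraph.dist_le (SimpleGraph.Walk.cons h1 (SimpleGraph.Walk.cons h2
      (SimpleGraph.Walk.cons h3 SimpleGraph.Walk.nil)))
    simpa using this
  have hreach : (chainGraph d).Reachable I J :=
    (SimpleGraph.Walk.cons h1 (SimpleGraph.Walk.cons h2
      (SimpleGraph.Walk.cons h3 SimpleGraph.Walk.nil))).reachable
  have hinc : ¬ scomp I.1 J.1 := by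
    rw [hJ]; exact sext_incomp_scpl hext I.2.1 I.2.2
  have hne : I ≠ J := by
    rw [vert_ne_iff, hJ]; exact sext_ne_scpl hext I.2.1
  have h0 : (chainGraph d).dist I J ≠ 0 := by
    rw [SimpleGraph.dist_ne_zero_iff_ne_and_reachable]
    exact ⟨hne, hreach⟩
  have h1' : (chainGraph d).dist I J ≠ 1 := by
    rw [ne_eq, SimpleGraph.dist_eq_one_iff_adj, chain_adj_iff]
    rintro ⟨_, hc⟩; exact hinc hc
  have h2' : (chainGraph d).dist I J ≠ 2 := by
    intro hh
    obtain ⟨p, hp⟩ := hreach.exists_walk_length_eq_dist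
    rw [hh] at hp
    cases p with
    | nil => simp at hp
    | cons ha q =>
      cases q with
      | nil => simp at hp
      | cons hb r =>
        cases r with
        | nil => exact no_common_nbr_cpair hext hJ _ ⟨ha, hb⟩
        | cons hc s => simp [SimpleGraph.Walk.length_cons] at hp
  omega

lemma dist_le_three (hd1 : ∀ i, 1 ≤ d i) (I J : ChainVert d) :
    (chainGraph d).dist I J ≤ 3 := by
  classical
  by_cases heq : I = J
  · subst heq; simp [SimpleGraph.dist_self]
  by_cases hc : scomp I.1 J.1
  · have : (chainGraph d).dist I J = 1 := by
      rw [SimpleGraph.dist_eq_one_iff_adj, chain_adj_iff]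
      exact ⟨(vert_ne_iff).mp heq, hc⟩
    omega
  by_cases hcp : CPair I.1 J.1
  · rw [dist_eq_three hd1 hcp.1 hcp.2]
  · have := dist_le_two hc hcp
    omega

lemma reach_all (hd1 : ∀ i, 1 ≤ d i) (I J : ChainVert d) :
    (chainGraph d).Reachable I J := by
  classical
  by_cases heq : I = J
  · subst heq; exact SimpleGraph.Reachable.refl _
  by_cases hc : scomp I.1 J.1
  · exact SimpleGraph.Adj.reachable (chain_adj_iff.mpr ⟨(vert_ne_iff).mp heq, hc⟩)
  by_cases hcp : CPair I.1 J.1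
  · obtain ⟨w, x, h1, h2, h3⟩ := exists_path3 hd1 hcp.1 hcp.2
    exact (SimpleGraph.Walk.cons h1 (SimpleGraph.Walk.cons h2
      (SimpleGraph.Walk.cons h3 SimpleGraph.Walk.nil))).reachable
  · exact reach_of_incomp hc hcp

lemma dist_le_two_of_ncpair (I J : ChainVert d)
    (h : ¬ CPair I.1 J.1) : (chainGraph d).dist I J ≤ 2 := by
  classical
  by_cases heq : I = J
  · subst heq; simp [SimpleGraph.dist_self]
  by_cases hc : scomp I.1 J.1
  · have : (chainGraph d).dist I J = 1 := by
      rw [SimpleGraph.dist_eq_one_iff_adj, chain_adj_iff]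
      exact ⟨(vert_ne_iff).mp heq, hc⟩
    omega
  · exact dist_le_two hc h

lemma dist_ge_two_of_incomp (hd1 : ∀ i, 1 ≤ d i) {I J : ChainVert d}
    (h : ¬ scomp I.1 J.1) : 2 ≤ (chainGraph d).dist I J := by
  have hne : I ≠ J := by
    rw [vert_ne_iff]; intro hh; exact h (Or.inl (le_of_eq hh))
  have h0 : (chainGraph d).dist I J ≠ 0 := by
    rw [SimpleGraph.dist_ne_zero_iff_ne_and_reachable]
    exact ⟨hne, reach_all hd1 I J⟩
  have h1 : (chainGraph d).dist I J ≠ 1 := by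
    rw [ne_eq, SimpleGraph.dist_eq_one_iff_adj, chain_adj_iff]
    rintro ⟨_, hc⟩; exact h hc
  omega

/-- comparable vertices are not mutually maximally distant -/
lemma not_mmd_of_lt (hm2 : 2 ≤ m) (hd1 : ∀ i, 1 ≤ d i) {I J : ChainVert d}
    (hlt : I.1 < J.1) : ¬ MMD (chainGraph d) I J := by
  classical
  rintro ⟨hne, h1, h2⟩
  have hdIJ : (chainGraph d).dist I J = 1 := by
    rw [SimpleGraph.dist_eq_one_iff_adj]
    exact Or.inl hlt
  by_cases hcase : ∃ k, J.1 k ≠ Fin.last _ ∧ ∃ j, j ≠ k ∧ I.1 j < J.1 j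
  · obtain ⟨k, hk, j, hjk, hij⟩ := hcase
    set w : ∀ i', Fin (d i' + 2) := Function.update I.1 k (Fin.last _) with hwdef
    have hwk : w k = Fin.last _ := Function.update_self _ _ _
    have hwj : w j = I.1 j := Function.update_of_ne hjk _ _
    have hIk : I.1 k < Fin.last _ :=
      lt_of_le_of_lt (hlt.le k) (Fin.lt_last_iff_ne_last.mpr hk)
    have hwgt : I.1 < w := by
      constructor
      · intro i'
        by_cases h : i' = k
        · subst h; rw [hwk]; exact Fin.le_last _
        · rw [hwdef, Function.update_of_ne h]
      · intro hle
        have := hle k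
        rw [hwk] at this
        exact (ne_of_lt hIk) (le_antisymm hIk.le this)
    have hwb : w ≠ ⊥ := by
      rw [sne_bot_iff]; exact ⟨k, by rw [hwk]; exact slast_ne_zero k⟩
    have hwt : w ≠ ⊤ := by
      rw [sne_top_iff]
      exact ⟨j, by rw [hwj]; exact ne_of_lt (lt_of_lt_of_le hij (Fin.le_last _))⟩
    have hwJ : ¬ scomp w J.1 := by
      rintro (h | h)
      · have := h k
        rw [hwk] at this
        exact hk (le_antisymm (Fin.le_last _) this)
      · have := h j
        rw [hwj] at this
        exact absurd (lt_of_lt_of_le hij this) (lt_irrefl _)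
    set W : ChainVert d := ⟨w, hwb, hwt⟩ with hW
    have hadj : (chainGraph d).Adj I W := Or.inl hwgt
    have := h1 W hadj
    rw [hdIJ] at this
    have h2' : 2 ≤ (chainGraph d).dist J W := dist_ge_two_of_incomp hd1 (by
      rintro (h | h)
      · exact hwJ (Or.inr h)
      · exact hwJ (Or.inl h))
    omega
  · push_neg at hcase
    obtain ⟨j₀, hj₀⟩ := exists_lt_coord hlt
    obtain ⟨k₀, hk₀⟩ := sne_top_iff.mp J.2.2
    have heqoff : ∀ j, j ≠ k₀ → I.1 j = J.1 j := by
      intro j hj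
      exact le_antisymm (hlt.le j) (hcase k₀ hk₀ j hj)
    have hj₀k₀ : j₀ = k₀ := by
      by_contra h
      rw [heqoff j₀ h] at hj₀
      exact lt_irrefl _ hj₀
    -- pick l ≠ k₀
    have hm' : (0 : ℕ) < m := by omega
    have hm'' : (1 : ℕ) < m := by omega
    set i0 : Fin m := ⟨0, hm'⟩
    set i1 : Fin m := ⟨1, hm''⟩
    have hi01 : i0 ≠ i1 := by simp [i0, i1, Fin.ext_iff]
    set l : Fin m := if k₀ = i0 then i1 else i0 with hl
    have hlk₀ : l ≠ k₀ := by
      by_cases h : k₀ = i0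
      · rw [hl, if_pos h, h]; exact hi01.symm
      · rw [hl, if_neg h]; exact fun hh => h hh.symm
    have hJl : J.1 l = Fin.last _ := by
      by_contra h
      exact absurd hj₀ (not_lt.mpr (hcase l h j₀ (by rw [hj₀k₀]; exact Ne.symm hlk₀)))
    have hIl : I.1 l = Fin.last _ := by rw [heqoff l hlk₀]; exact hJl
    set w : ∀ i', Fin (d i' + 2) := Function.update J.1 l 0 with hwdef
    have hwl : w l = 0 := Function.update_self _ _ _
    have hwk₀ : w k₀ = J.1 k₀ := Function.update_of_ne (Ne.symm hlk₀) _ _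
    have hwlt : w < J.1 := by
      constructor
      · intro i'
        by_cases h : i' = l
        · subst h; rw [hwl]; exact Fin.zero_le _
        · rw [hwdef, Function.update_of_ne h]
      · intro hle
        have := hle l
        rw [hwl, hJl] at this
        exact slast_ne_zero l (le_antisymm this (Fin.zero_le _))
    have hwb : w ≠ ⊥ := by
      rw [sne_bot_iff]
      refine ⟨k₀, ?_⟩
      rw [hwk₀]
      intro h
      rw [hj₀k₀] at hj₀
      rw [h] at hj₀
      exact absurd hj₀ (by simp [Fin.lt_def])
    have hwt : w ≠ ⊤ := by
      rw [sne_top_iff]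
      exact ⟨l, by rw [hwl]; exact (slast_ne_zero l).symm⟩
    have hwI : ¬ scomp I.1 w := by
      rintro (h | h)
      · have := h l
        rw [hwl, hIl] at this
        exact slast_ne_zero l (le_antisymm this (Fin.zero_le _))
      · have := h k₀
        rw [hwk₀] at this
        rw [hj₀k₀] at hj₀
        exact absurd (lt_of_lt_of_le hj₀ this) (lt_irrefl _)
    set W : ChainVert d := ⟨w, hwb, hwt⟩ with hW
    have hadj : (chainGraph d).Adj J W := Or.inr hwlt
    have := h2 W hadj
    rw [hdIJ] at this
    have h2' : 2 ≤ (chainGraph d).dist I W := dist_ge_two_of_incomp hd1 hwI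
    omega

lemma not_mmd_of_comp (hm2 : 2 ≤ m) (hd1 : ∀ i, 1 ≤ d i) {I J : ChainVert d}
    (hne : I ≠ J) (hc : scomp I.1 J.1) : ¬ MMD (chainGraph d) I J := by
  rcases hc with h | h
  · exact not_mmd_of_lt hm2 hd1 (lt_of_le_of_ne h (vert_ne_iff.mp hne))
  · intro hmmd
    have : MMD (chainGraph d) J I := (strongResolvingGraph (chainGraph d)).adj_symm hmmd
    exact not_mmd_of_lt hm2 hd1
      (lt_of_le_of_ne h (vert_ne_iff.mp (Ne.symm hne))) this

/-- two incomparable non-extreme vertices are MMD -/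
lemma mmd_of_nonext (hd1 : ∀ i, 1 ≤ d i) {I J : ChainVert d}
    (hI : ¬ SExt I.1) (hJ : ¬ SExt J.1) (hnc : ¬ scomp I.1 J.1) :
    MMD (chainGraph d) I J := by
  have hne : I ≠ J := by
    rw [vert_ne_iff]; intro h; exact hnc (Or.inl (le_of_eq h))
  have hdist : (chainGraph d).dist I J = 2 :=
    dist_eq_two hnc (fun h => hI h.1)
  refine ⟨hne, ?_, ?_⟩
  · intro w _
    rw [hdist]
    exact dist_le_two_of_ncpair J w (fun h => hJ h.1)
  · intro w _
    rw [hdist]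
    exact dist_le_two_of_ncpair I w (fun h => hI h.1)

/-- a vertex incomparable to an extreme vertex and its complement is MMD with it -/
lemma mmd_of_ext (hd1 : ∀ i, 1 ≤ d i) {v J : ChainVert d}
    (hext : SExt J.1) (h1 : ¬ scomp v.1 J.1) (h2 : ¬ scomp v.1 (scpl J.1)) :
    MMD (chainGraph d) v J := by
  have hne : v ≠ J := by
    rw [vert_ne_iff]; intro h; exact h1 (Or.inl (le_of_eq h))
  have hncp : ¬ CPair v.1 J.1 := by
    rintro ⟨hev, hJv⟩
    apply h2
    rw [hJv, scpl_scpl]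
    exact Or.inr le_rfl
  have hdist : (chainGraph d).dist v J = 2 := dist_eq_two h1 hncp
  refine ⟨hne, ?_, ?_⟩
  · intro w hadj
    rw [hdist]
    apply dist_le_two_of_ncpair
    rintro ⟨_, hw⟩
    rw [chain_adj_iff] at hadj
    apply h2
    rw [← hw]
    exact hadj.2
  · intro w hadj
    rw [hdist]
    apply dist_le_two_of_ncpair
    rintro ⟨hev, hw⟩
    rw [chain_adj_iff] at hadj
    apply h2
    rw [← scomp_scpl_comm]
    rw [← hw]
    exact hadj.2

/-- an extreme vertex and its complement are MMD -/
lemma mmd_cpair (hd1 : ∀ i, 1 ≤ d i) {J Jc : ChainVert d}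
    (hext : SExt J.1) (hJc : Jc.1 = scpl J.1) :
    MMD (chainGraph d) J Jc := by
  have hne : J ≠ Jc := by
    rw [vert_ne_iff, hJc]; exact sext_ne_scpl hext J.2.1
  have hdist : (chainGraph d).dist J Jc = 3 := dist_eq_three hd1 hext hJc
  refine ⟨hne, ?_, ?_⟩
  · intro w _
    rw [hdist]
    exact dist_le_three hd1 Jc w
  · intro w _
    rw [hdist]
    exact dist_le_three hd1 J w

end Stmt18Aux2


section Stmt18Low

open Finset

variable {m : ℕ} (d : Fin m → ℕ)

def dfun : ℕ → ℕ := fun n => if h : n < m then d ⟨n, h⟩ else 0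

def psum (n : ℕ) : ℕ := ∑ j ∈ Finset.range n, dfun d j

lemma psum_succ (n : ℕ) : psum d (n+1) = psum d n + dfun d n :=
  Finset.sum_range_succ _ _

lemma psum_m : psum d m = ∑ i, d i := by
  rw [psum, ← Fin.sum_univ_eq_sum_range (fun n => dfun d n) m]
  apply Finset.sum_congr rfl
  intro i _
  simp [dfun, i.isLt]

lemma exists_active {t : ℕ} (ht : t < psum d m) :
    ∃ i : Fin m, psum d i.val ≤ t ∧ t < psum d i.val + d i := by
  suffices h : ∀ n, n ≤ m → ∀ t, t < psum d n →
      ∃ j, ∃ hj : j < m, psum d j ≤ t ∧ t < psum d j + d ⟨j, hj⟩ by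
    obtain ⟨j, hj, h1, h2⟩ := h m le_rfl t ht
    exact ⟨⟨j, hj⟩, h1, h2⟩
  intro n
  induction n with
  | zero => intro _ t ht; simp [psum] at ht
  | succ n ih =>
    intro hn t ht
    by_cases h : t < psum d n
    · obtain ⟨j, hj, h1, h2⟩ := ih (by omega) t h
      exact ⟨j, hj, h1, h2⟩
    · have hnm : n < m := by omega
      refine ⟨n, hnm, by omega, ?_⟩
      rw [psum_succ] at ht
      have hdd : dfun d n = d ⟨n, hnm⟩ := by simp [dfun, hnm]
      omega

def chval (ℓ : ℕ) (i : Fin m) : ℕ :=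
  if ℓ ≤ m then (if (i : ℕ) < ℓ then 1 else 0)
  else min (d i + 1) (max 1 (ℓ - m - psum d i.val + 1))

lemma chval_le (ℓ : ℕ) (i : Fin m) : chval d ℓ i ≤ d i + 1 := by
  unfold chval
  split
  · split <;> omega
  · exact min_le_left _ _

def chtup (ℓ : ℕ) : ∀ i, Fin (d i + 2) :=
  fun i => ⟨chval d ℓ i, Nat.lt_succ_of_le (chval_le d ℓ i)⟩

lemma chval_mono_step (ℓ : ℕ) (i : Fin m) : chval d ℓ i ≤ chval d (ℓ+1) i := by
  unfold chval
  by_cases h1 : ℓ + 1 ≤ m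
  · rw [if_pos (by omega : ℓ ≤ m), if_pos h1]
    split_ifs <;> omega
  · by_cases h2 : ℓ ≤ m
    · rw [if_pos h2, if_neg h1]
      have hge : 1 ≤ min (d i + 1) (max 1 (ℓ + 1 - m - psum d i.val + 1)) :=
        le_min (by omega) (le_max_left _ _)
      split_ifs <;> omega
    · rw [if_neg h2, if_neg h1]
      exact min_le_min le_rfl (max_le_max le_rfl (by omega))

lemma chval_mono {a b : ℕ} (h : a ≤ b) (i : Fin m) : chval d a i ≤ chval d b i := by
  induction b, h using Nat.le_induction with
  | base => exact le_rfl
  | succ n hn ih => exact le_trans ih (chval_mono_step d n i)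

lemma chval_strict (hd1 : ∀ i, 1 ≤ d i) (hm2 : 2 ≤ m) {ℓ : ℕ} (h1 : 1 ≤ ℓ)
    (h2 : ℓ + 1 ≤ (∑ i, d i) + m - 1) :
    ∃ i, chval d ℓ i < chval d (ℓ+1) i := by
  have hdm : m ≤ ∑ i, d i := by
    calc m = ∑ _i : Fin m, 1 := by simp
    _ ≤ ∑ i, d i := Finset.sum_le_sum (fun i _ => hd1 i)
  rcases lt_trichotomy ℓ m with h | h | h
  · refine ⟨⟨ℓ, h⟩, ?_⟩
    unfold chval
    rw [if_pos (by omega : ℓ ≤ m), if_pos (by omega : ℓ + 1 ≤ m)]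
    simp
  · have h0m : 0 < m := by omega
    refine ⟨⟨0, h0m⟩, ?_⟩
    have hp0 : psum d (0:ℕ) = 0 := by simp [psum]
    have hd0 : 1 ≤ d ⟨0, h0m⟩ := hd1 _
    unfold chval
    rw [if_pos (le_of_eq h), if_neg (show ¬ (ℓ + 1 ≤ m) by omega)]
    rw [if_pos (show ((⟨0, h0m⟩ : Fin m) : ℕ) < ℓ from (by omega : (0:ℕ) < ℓ))]
    simp only [hp0]
    have he : ℓ + 1 - m - 0 + 1 = 2 := by omega
    rw [he, max_eq_right (by norm_num), min_eq_right (by omega)]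
    omega
  · set t := ℓ - m with htdef
    have ht1 : 1 ≤ t := by omega
    have ht2 : t < psum d m := by rw [psum_m]; omega
    obtain ⟨i, hi1, hi2⟩ := exists_active d ht2
    refine ⟨i, ?_⟩
    unfold chval
    rw [if_neg (show ¬ (ℓ ≤ m) by omega), if_neg (show ¬ (ℓ + 1 ≤ m) by omega)]
    have e1 : ℓ - m - psum d i.val + 1 = t - psum d i.val + 1 := by omega
    have e2 : ℓ + 1 - m - psum d i.val + 1 = t - psum d i.val + 2 := by omega
    rw [e1, e2]
    rw [max_eq_right (by omega), max_eq_right (by omega)]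
    rw [min_eq_right (by omega)]
    have : t - psum d i.val + 2 ≤ d i + 1 ∨ d i + 1 < t - psum d i.val + 2 := by omega
    rcases this with h' | h'
    · rw [min_eq_right h']; omega
    · rw [min_eq_left (by omega)]; omega

lemma chval_mid (hd1 : ∀ i, 1 ≤ d i) (hm2 : 2 ≤ m) {ℓ : ℕ} (h1 : 1 ≤ ℓ)
    (h2 : ℓ ≤ (∑ i, d i) + m - 1) :
    ∃ i, 1 ≤ chval d ℓ i ∧ chval d ℓ i ≤ d i := by
  have hdm : m ≤ ∑ i, d i := by
    calc m = ∑ _i : Fin m, 1 := by simp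
    _ ≤ ∑ i, d i := Finset.sum_le_sum (fun i _ => hd1 i)
  by_cases h : ℓ ≤ m
  · have h0m : 0 < m := by omega
    refine ⟨⟨0, h0m⟩, ?_⟩
    unfold chval
    rw [if_pos h, if_pos (by simp; omega)]
    exact ⟨le_rfl, hd1 _⟩
  · set t := ℓ - m with htdef
    have ht1 : 1 ≤ t := by omega
    have ht2 : t < psum d m := by rw [psum_m]; omega
    obtain ⟨i, hi1, hi2⟩ := exists_active d ht2
    refine ⟨i, ?_⟩
    unfold chval
    rw [if_neg h]
    have e1 : ℓ - m - psum d i.val + 1 = t - psum d i.val + 1 := by omega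
    rw [e1, max_eq_right (by omega), min_eq_right (by omega)]
    omega

lemma chtup_vert (hd1 : ∀ i, 1 ≤ d i) (hm2 : 2 ≤ m) {ℓ : ℕ} (h1 : 1 ≤ ℓ)
    (h2 : ℓ ≤ (∑ i, d i) + m - 1) :
    chtup d ℓ ≠ ⊥ ∧ chtup d ℓ ≠ ⊤ := by
  obtain ⟨i, hi1, hi2⟩ := chval_mid d hd1 hm2 h1 h2
  constructor
  · rw [sne_bot_iff]
    refine ⟨i, fun hc => ?_⟩
    have hv : chval d ℓ i = 0 := congrArg Fin.val hc
    omega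
  · rw [sne_top_iff]
    refine ⟨i, fun hc => ?_⟩
    have hv : chval d ℓ i = d i + 1 := congrArg Fin.val hc
    omega

lemma chtup_lt (hd1 : ∀ i, 1 ≤ d i) (hm2 : 2 ≤ m) {a b : ℕ} (h1 : 1 ≤ a)
    (hab : a < b) (hb : b ≤ (∑ i, d i) + m - 1) :
    chtup d a < chtup d b := by
  constructor
  · intro i
    rw [Fin.le_def]
    exact chval_mono d (le_of_lt hab) i
  · intro hle
    obtain ⟨i, hi⟩ := chval_strict d hd1 hm2 h1 (by omega)
    have h1' := hle i
    rw [Fin.le_def] at h1'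
    have h2' : chval d (a+1) i ≤ chval d b i := chval_mono d (by omega) i
    simp only [chtup] at h1'
    omega

noncomputable def lowS (hd1 : ∀ i, 1 ≤ d i) (hm2 : 2 ≤ m) : Finset (ChainVert d) :=
  Finset.univ.map ⟨fun j : Fin ((∑ i, d i) + m - 1) =>
    (⟨chtup d (j.val + 1),
      (chtup_vert d hd1 hm2 (by omega) (by omega)).1,
      (chtup_vert d hd1 hm2 (by omega) (by omega)).2⟩ : ChainVert d),
    by
      intro a b hab
      have ha' := a.isLt
      have hb' := b.isLt
      by_contra hne
      have hab2 : a.val ≠ b.val := fun h => hne (Fin.ext h)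
      rcases Ne.lt_or_gt hab2 with h | h
      · have := chtup_lt d hd1 hm2 (a := a.val+1) (b := b.val+1) (by omega)
          (by omega) (by omega)
        replace hab := congrArg Subtype.val hab; dsimp only at hab
        rw [hab] at this
        exact lt_irrefl _ this
      · have := chtup_lt d hd1 hm2 (a := b.val+1) (b := a.val+1) (by omega)
          (by omega) (by omega)
        replace hab := congrArg Subtype.val hab; dsimp only at hab
        rw [hab] at this
        exact lt_irrefl _ this⟩

lemma lowS_card (hd1 : ∀ i, 1 ≤ d i) (hm2 : 2 ≤ m) :
    (lowS d hd1 hm2).card = (∑ i, d i) + m - 1 := by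
  rw [lowS, Finset.card_map, Finset.card_univ, Fintype.card_fin]

lemma lowS_indep (hd1 : ∀ i, 1 ≤ d i) (hm2 : 2 ≤ m) :
    IsIndepFinset (strongResolvingGraph (chainGraph d)) (lowS d hd1 hm2) := by
  intro u hu v hv hne
  rw [lowS, Finset.mem_map] at hu hv
  obtain ⟨a, _, ha⟩ := hu
  obtain ⟨b, _, hb⟩ := hv
  have hab : a ≠ b := by
    intro h; rw [h, hb] at ha; exact hne ha.symm
  have ha' := a.isLt
  have hb' := b.isLt
  have hab2 : a.val ≠ b.val := fun h => hab (Fin.ext h)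
  have hcomp : scomp u.1 v.1 := by
    rcases Ne.lt_or_gt hab2 with h | h
    · left
      rw [← ha, ← hb]
      exact (chtup_lt d hd1 hm2 (by omega) (by omega) (by omega)).le
    · right
      rw [← ha, ← hb]
      exact (chtup_lt d hd1 hm2 (by omega) (by omega) (by omega)).le
  exact not_mmd_of_comp hm2 hd1 hne hcomp

end Stmt18Low


section Stmt18Comb

open Finset

variable {m : ℕ}

def laminar (F : Finset (Finset (Fin m))) : Prop :=
  ∀ Y ∈ F, ∀ Z ∈ F, Y ⊆ Z ∨ Z ⊆ Y ∨ Disjoint Y Z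

lemma laminar_subset {F F' : Finset (Finset (Fin m))} (h : laminar F) (hs : F' ⊆ F) :
    laminar F' :=
  fun Y hY Z hZ => h Y (hs hY) Z (hs hZ)

lemma exists_submax (F : Finset (Finset (Fin m))) (h : F.Nonempty) :
    ∃ M ∈ F, (∀ Y ∈ F, M ⊆ Y → Y = M) ∧ (∀ Y ∈ F, Y.card ≤ M.card) := by
  obtain ⟨M, hM, hmax⟩ := F.exists_max_image Finset.card h
  exact ⟨M, hM, fun Y hY hsub =>
    (Finset.eq_of_subset_of_card_le hsub (hmax Y hY)).symm, hmax⟩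

lemma sigma_pos {k : Fin m → ℕ} (hk : ∀ j, 2 ≤ k j) {Y : Finset (Fin m)}
    (hY : Y.Nonempty) : 2 ≤ ∑ j ∈ Y, k j := by
  obtain ⟨j, hj⟩ := hY
  calc 2 ≤ k j := hk j
  _ ≤ ∑ j ∈ Y, k j := Finset.single_le_sum (fun _ _ => Nat.zero_le _) hj

lemma sigma_lt_of_ssubset {k : Fin m → ℕ} (hk : ∀ j, 2 ≤ k j)
    {A B : Finset (Fin m)} (hAB : A ⊆ B) (hne : A ≠ B) :
    (∑ j ∈ A, k j) + 2 ≤ ∑ j ∈ B, k j := by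
  have hsplit : ∑ j ∈ B, k j = (∑ j ∈ A, k j) + ∑ j ∈ B \ A, k j := by
    rw [← Finset.sum_union disjoint_sdiff]
    rw [Finset.union_sdiff_of_subset hAB]
  have hBA : (B \ A).Nonempty := by
    rw [Finset.sdiff_nonempty]
    intro h
    exact hne (le_antisymm hAB h)
  have := sigma_pos hk hBA
  omega

theorem lamb (k : Fin m → ℕ) (hk : ∀ j, 2 ≤ k j) :
    ∀ F : Finset (Finset (Fin m)), laminar F → (∀ Y ∈ F, Y.Nonempty) → F.Nonempty →
      F.card + 1 ≤ ∑ j ∈ F.sup id, k j := by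
  intro F
  induction F using Finset.strongInduction with
  | _ F ih =>
    intro hlam hne hF
    classical
    obtain ⟨M, hM, hMmax, hMcard⟩ := exists_submax F hF
    set FM := F.filter (fun Y => Y ⊆ M) with hFMdef
    set Fr := F.filter (fun Y => ¬ Y ⊆ M) with hFrdef
    have hMF : M ∈ FM := mem_filter.mpr ⟨hM, subset_rfl⟩
    have hFMFr : FM ∪ Fr = F := Finset.filter_union_filter_not_eq _ F
    have hcards : FM.card + Fr.card = F.card := by
      rw [Finset.card_filter_add_card_filter_not]
    have hrdisj : ∀ Y ∈ Fr, Disjoint Y M := by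
      intro Y hY
      obtain ⟨hYF, hYn⟩ := mem_filter.mp hY
      rcases hlam Y hYF M hM with h | h | h
      · exact absurd h hYn
      · exact absurd (subset_of_eq (hMmax Y hYF h)) hYn
      · exact h
    by_cases hFr0 : Fr = ∅
    · -- all sets are inside M
      have hallM : ∀ Y ∈ F, Y ⊆ M := by
        intro Y hY
        by_contra hs
        have : Y ∈ Fr := mem_filter.mpr ⟨hY, hs⟩
        rw [hFr0] at this
        exact absurd this (notMem_empty _)
      have hsup : F.sup id = M :=
        le_antisymm (Finset.sup_le (fun Y hY => hallM Y hY)) (Finset.le_sup (f := id) hM)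
      rw [hsup]
      set F' := F.erase M with hF'def
      have hcard' : F'.card = F.card - 1 := Finset.card_erase_of_mem hM
      have hcardpos : 1 ≤ F.card := Finset.card_pos.mpr hF
      by_cases hF'0 : F' = ∅
      · have hFcard : F.card = 1 := by
          have h1 := Finset.card_erase_of_mem hM
          have h0 : (F.erase M).card = 0 := by rw [← hF'def, hF'0]; simp
          omega
        rw [hFcard]
        exact sigma_pos hk (hne M hM)
      · obtain ⟨M', hM', hM'max, hM'card⟩ := exists_submax F' (nonempty_of_ne_empty hF'0)
        have hM'F : M' ∈ F := mem_of_mem_erase hM'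
        have hM'sub : M' ⊆ M := hallM _ hM'F
        have hM'ne : M' ≠ M := ne_of_mem_erase hM'
        set FM' := F'.filter (fun Y => Y ⊆ M') with hFM'def
        set Fr' := F'.filter (fun Y => ¬ Y ⊆ M') with hFr'def
        have hM'FM' : M' ∈ FM' := mem_filter.mpr ⟨hM', subset_rfl⟩
        have hcards' : FM'.card + Fr'.card = F'.card := by
          rw [Finset.card_filter_add_card_filter_not]
        have hr'disj : ∀ Y ∈ Fr', Disjoint Y M' := by
          intro Y hY
          obtain ⟨hYF', hYn⟩ := mem_filter.mp hY
          have hYF : Y ∈ F := mem_of_mem_erase hYF'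
          rcases hlam Y hYF M' hM'F with h | h | h
          · exact absurd h hYn
          · exact absurd (subset_of_eq (hM'max Y hYF' h)) hYn
          · exact h
        have hF'F : F' ⊂ F := Finset.erase_ssubset hM
        have hFM'F : FM' ⊂ F := lt_of_le_of_lt (Finset.filter_subset _ _) hF'F
        have rec1 : FM'.card + 1 ≤ ∑ j ∈ FM'.sup id, k j :=
          ih FM' hFM'F
            (laminar_subset hlam (fun Y hY => mem_of_mem_erase (mem_filter.mp hY).1))
            (fun Y hY => hne Y (mem_of_mem_erase (mem_filter.mp hY).1))
            ⟨M', hM'FM'⟩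
        have hsupM' : FM'.sup id ⊆ M' := by
          intro j hj
          obtain ⟨Y, hY, hjY⟩ := Finset.mem_sup.mp hj
          exact (mem_filter.mp hY).2 hjY
        have rec1' : FM'.card + 1 ≤ ∑ j ∈ M', k j :=
          le_trans rec1 (Finset.sum_le_sum_of_subset hsupM')
        have hMM' : (∑ j ∈ M', k j) + 2 ≤ ∑ j ∈ M, k j :=
          sigma_lt_of_ssubset hk hM'sub hM'ne
        by_cases hFr'0 : Fr' = ∅
        · have : FM'.card = F'.card := by
            rw [← hcards', hFr'0]
            simp
          omega
        · have hFr'F : Fr' ⊂ F := lt_of_le_of_lt (Finset.filter_subset _ _) hF'F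
          have rec2 : Fr'.card + 1 ≤ ∑ j ∈ Fr'.sup id, k j :=
            ih Fr' hFr'F
              (laminar_subset hlam (fun Y hY => mem_of_mem_erase (mem_filter.mp hY).1))
              (fun Y hY => hne Y (mem_of_mem_erase (mem_filter.mp hY).1))
              (nonempty_of_ne_empty hFr'0)
          have hsupFr' : Fr'.sup id ⊆ M \ M' := by
            intro j hj
            obtain ⟨Y, hY, hjY⟩ := Finset.mem_sup.mp hj
            rw [Finset.mem_sdiff]
            constructor
            · exact hallM Y (mem_of_mem_erase (mem_filter.mp hY).1) hjY
            · intro hjM'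
              exact (Finset.disjoint_left.mp (hr'disj Y hY)) hjY hjM'
          have rec2' : Fr'.card + 1 ≤ ∑ j ∈ M \ M', k j :=
            le_trans rec2 (Finset.sum_le_sum_of_subset hsupFr')
          have hsplit : ∑ j ∈ M, k j = (∑ j ∈ M', k j) + ∑ j ∈ M \ M', k j := by
            rw [← Finset.sum_union disjoint_sdiff, Finset.union_sdiff_of_subset hM'sub]
          omega
    · -- Fr nonempty
      have hFMF : FM ⊂ F := by
        rw [Finset.ssubset_iff_of_subset (Finset.filter_subset _ _)]
        obtain ⟨Y, hY⟩ := nonempty_of_ne_empty hFr0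
        exact ⟨Y, (mem_filter.mp hY).1, fun hh => (mem_filter.mp hY).2 (mem_filter.mp hh).2⟩
      have hFrF : Fr ⊂ F := by
        rw [Finset.ssubset_iff_of_subset (Finset.filter_subset _ _)]
        exact ⟨M, hM, fun hh => (mem_filter.mp hh).2 subset_rfl⟩
      have rec1 : FM.card + 1 ≤ ∑ j ∈ FM.sup id, k j :=
        ih FM hFMF (laminar_subset hlam (Finset.filter_subset _ _))
          (fun Y hY => hne Y ((mem_filter.mp hY).1)) ⟨M, hMF⟩
      have rec2 : Fr.card + 1 ≤ ∑ j ∈ Fr.sup id, k j :=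
        ih Fr hFrF (laminar_subset hlam (Finset.filter_subset _ _))
          (fun Y hY => hne Y ((mem_filter.mp hY).1)) (nonempty_of_ne_empty hFr0)
      have hdisj : Disjoint (FM.sup id) (Fr.sup id) := by
        rw [Finset.disjoint_left]
        intro j hj1 hj2
        obtain ⟨Y, hY, hjY⟩ := Finset.mem_sup.mp hj1
        obtain ⟨Z, hZ, hjZ⟩ := Finset.mem_sup.mp hj2
        have hYM : Y ⊆ M := (mem_filter.mp hY).2
        exact (Finset.disjoint_left.mp (hrdisj Z hZ)) hjZ (hYM hjY)
      have hsupeq : F.sup id = FM.sup id ∪ Fr.sup id := by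
        rw [← hFMFr, Finset.sup_union]
        rfl
      have hsum : ∑ j ∈ F.sup id, k j = (∑ j ∈ FM.sup id, k j) + ∑ j ∈ Fr.sup id, k j := by
        rw [hsupeq, Finset.sum_union hdisj]
      omega

end Stmt18Comb


section Stmt18Comb2

open Finset

variable {m : ℕ}

theorem lamA (k : Fin m → ℕ) (hk : ∀ j, 2 ≤ k j) (u w : Fin m → ℕ)
    (huw : ∀ j, u j ≤ w j) (hwk : ∀ j, w j ≤ k j)
    (hNE : ¬ (∀ j, u j = 0 ∨ u j = k j)) :
    ∀ F : Finset (Finset (Fin m)), ∀ S : Finset (Fin m),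
      S ∈ F → (∀ Y ∈ F, Y ⊆ S) → laminar F → (∀ Y ∈ F, Y.Nonempty) →
      (∀ Y ∈ F, ∀ j ∈ Y, w j = k j) →
      (∀ Y ∈ F, (∀ j ∈ Y, u j = 0) ∨ (∀ j ∉ Y, u j = 0)) →
      ¬ (∀ j ∈ S, u j = 0) →
      F.card ≤ ∑ j ∈ S, (w j - u j) := by
  intro F
  induction F using Finset.strongInduction with
  | _ F ih =>
    intro S hS hsub hlam hne hwfull htype hSu
    classical
    have hsupp : ∀ j, j ∉ S → u j = 0 := (htype S hS).resolve_left hSu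
    have hwS : ∀ j ∈ S, w j = k j := hwfull S hS
    set F1 := (F.erase S).filter (fun Y => ¬ ∀ j ∈ Y, u j = 0) with hF1def
    by_cases hF10 : F1 = ∅
    · -- all other sets have u ≡ 0 on them
      have huz : ∀ Y ∈ F.erase S, ∀ j ∈ Y, u j = 0 := by
        intro Y hY
        by_contra hc
        have : Y ∈ F1 := mem_filter.mpr ⟨hY, hc⟩
        rw [hF10] at this
        exact absurd this (notMem_empty _)
      set V := (F.erase S).sup id with hVdef
      have hVS : V ⊆ S := by
        intro j hj
        obtain ⟨Y, hY, hjY⟩ := Finset.mem_sup.mp hj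
        exact hsub Y (mem_of_mem_erase hY) hjY
      have hVu : ∀ j ∈ V, u j = 0 := by
        intro j hj
        obtain ⟨Y, hY, hjY⟩ := Finset.mem_sup.mp hj
        exact huz Y hY j hjY
      have hextra : ∃ j ∈ S \ V, u j < w j := by
        by_contra hc
        push_neg at hc
        apply hNE
        intro j
        by_cases hjS : j ∈ S
        · by_cases hjV : j ∈ V
          · exact Or.inl (hVu j hjV)
          · right
            have h1 := hc j (mem_sdiff.mpr ⟨hjS, hjV⟩)
            have h2 := huw j
            have h3 := hwS j hjS
            omega
        · exact Or.inl (hsupp j hjS)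
      obtain ⟨j0, hj0, hj0lt⟩ := hextra
      have hsplit : ∑ j ∈ S, (w j - u j) =
          (∑ j ∈ V, (w j - u j)) + ∑ j ∈ S \ V, (w j - u j) := by
        rw [← Finset.sum_union disjoint_sdiff, Finset.union_sdiff_of_subset hVS]
      have hXV : ∑ j ∈ V, (w j - u j) = ∑ j ∈ V, k j := by
        apply Finset.sum_congr rfl
        intro j hj
        rw [hVu j hj, hwS j (hVS hj)]
        omega
      have hX2 : 1 ≤ ∑ j ∈ S \ V, (w j - u j) := by
        calc 1 ≤ w j0 - u j0 := by omega
        _ ≤ ∑ j ∈ S \ V, (w j - u j) :=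
          Finset.single_le_sum (f := fun j => w j - u j) (fun _ _ => Nat.zero_le _) hj0
      rcases (F.erase S).eq_empty_or_nonempty with hE | hEne
      · have hcard : F.card = 1 := by
          have h1 := Finset.card_erase_of_mem hS
          rw [hE] at h1
          simp at h1
          have := Finset.card_pos.mpr ⟨S, hS⟩
          omega
        omega
      · have hlamb := lamb k hk (F.erase S)
          (laminar_subset hlam (Finset.erase_subset _ _))
          (fun Y hY => hne Y (mem_of_mem_erase hY)) hEne
        rw [← hVdef] at hlamb
        have hcard : (F.erase S).card = F.card - 1 := Finset.card_erase_of_mem hS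
        have hFpos : 1 ≤ F.card := Finset.card_pos.mpr ⟨S, hS⟩
        omega
    · obtain ⟨S', hS'1, hS'max, hS'card⟩ := exists_submax F1 (nonempty_of_ne_empty hF10)
      have hS'F : S' ∈ F := mem_of_mem_erase (mem_filter.mp hS'1).1
      have hS'nu : ¬ ∀ j ∈ S', u j = 0 := (mem_filter.mp hS'1).2
      have hS'S : S' ⊆ S := hsub _ hS'F
      have hS'neS : S' ≠ S := ne_of_mem_erase (mem_filter.mp hS'1).1
      have hsupp' : ∀ j, j ∉ S' → u j = 0 := (htype S' hS'F).resolve_left hS'nu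
      obtain ⟨j1, hj1S', hj1u⟩ : ∃ j ∈ S', u j ≠ 0 := by
        by_contra hc
        push_neg at hc
        exact hS'nu hc
      set Fi := F.filter (fun Y => Y ⊆ S') with hFidef
      set Fr := F.filter (fun Y => ¬ Y ⊆ S') with hFrdef
      have hcards : Fi.card + Fr.card = F.card :=
        Finset.card_filter_add_card_filter_not _
      have hSnotin : S ∉ Fi := by
        intro h
        exact hS'neS (le_antisymm hS'S ((mem_filter.mp h).2))
      have hFiF : Fi ⊂ F := ⟨Finset.filter_subset _ _, fun hsub' => hSnotin (hsub' hS)⟩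
      have rec1 : Fi.card ≤ ∑ j ∈ S', (w j - u j) :=
        ih Fi hFiF S' (mem_filter.mpr ⟨hS'F, subset_rfl⟩)
          (fun Y hY => (mem_filter.mp hY).2)
          (laminar_subset hlam (Finset.filter_subset _ _))
          (fun Y hY => hne Y (mem_filter.mp hY).1)
          (fun Y hY => hwfull Y (mem_filter.mp hY).1)
          (fun Y hY => htype Y (mem_filter.mp hY).1)
          hS'nu
      have hSFr : S ∈ Fr :=
        mem_filter.mpr ⟨hS, fun h => hS'neS (le_antisymm hS'S h)⟩
      have hFr' : ∀ Y ∈ Fr.erase S, (∀ j ∈ Y, u j = 0) ∧ Disjoint Y S' := by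
        intro Y hY
        have hYF : Y ∈ F := (mem_filter.mp (mem_of_mem_erase hY)).1
        have hYnS' : ¬ Y ⊆ S' := (mem_filter.mp (mem_of_mem_erase hY)).2
        have hYneS : Y ≠ S := ne_of_mem_erase hY
        have huzY : ∀ j ∈ Y, u j = 0 := by
          by_contra hc
          have hYF1 : Y ∈ F1 :=
            mem_filter.mpr ⟨Finset.mem_erase.mpr ⟨hYneS, hYF⟩, hc⟩
          rcases hlam Y hYF S' hS'F with h | h | h
          · exact hYnS' h
          · exact hYnS' (subset_of_eq (hS'max Y hYF1 h))
          · have hsuppY : ∀ j, j ∉ Y → u j = 0 := (htype Y hYF).resolve_left hc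
            have hj1Y : j1 ∈ Y := by
              by_contra hn
              exact hj1u (hsuppY j1 hn)
            exact (Finset.disjoint_left.mp h hj1Y) hj1S'
        refine ⟨huzY, ?_⟩
        rcases hlam Y hYF S' hS'F with h | h | h
        · exact absurd h hYnS'
        · exact absurd (huzY j1 (h hj1S')) hj1u
        · exact h
      set V := (Fr.erase S).sup id with hVdef
      have hVprop : V ⊆ S \ S' := by
        intro j hj
        obtain ⟨Y, hY, hjY⟩ := Finset.mem_sup.mp hj
        rw [Finset.mem_sdiff]
        refine ⟨hsub Y ((mem_filter.mp (mem_of_mem_erase hY)).1) hjY, ?_⟩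
        intro hjS'
        exact (Finset.disjoint_left.mp (hFr' Y hY).2) hjY hjS'
      have hsplitS : ∑ j ∈ S, (w j - u j) =
          (∑ j ∈ S', (w j - u j)) + ∑ j ∈ S \ S', (w j - u j) := by
        rw [← Finset.sum_union disjoint_sdiff, Finset.union_sdiff_of_subset hS'S]
      have hXSS' : ∑ j ∈ S \ S', (w j - u j) = ∑ j ∈ S \ S', k j := by
        apply Finset.sum_congr rfl
        intro j hj
        rw [hsupp' j (Finset.mem_sdiff.mp hj).2, hwS j (Finset.mem_sdiff.mp hj).1]
        omega
      have hSS'ne : (S \ S').Nonempty := by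
        rw [Finset.sdiff_nonempty]
        intro h
        exact hS'neS (le_antisymm hS'S h)
      have hsig2 : 2 ≤ ∑ j ∈ S \ S', k j := sigma_pos hk hSS'ne
      rcases (Fr.erase S).eq_empty_or_nonempty with hE | hEne
      · have hcardFr : Fr.card = 1 := by
          have h1 := Finset.card_erase_of_mem hSFr
          rw [hE] at h1
          simp at h1
          have := Finset.card_pos.mpr ⟨S, hSFr⟩
          omega
        omega
      · have hlamb := lamb k hk (Fr.erase S)
          (laminar_subset hlam (fun Y hY => (mem_filter.mp (mem_of_mem_erase hY)).1))
          (fun Y hY => hne Y ((mem_filter.mp (mem_of_mem_erase hY)).1)) hEne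
        rw [← hVdef] at hlamb
        have hσV : ∑ j ∈ V, k j ≤ ∑ j ∈ S \ S', k j :=
          Finset.sum_le_sum_of_subset hVprop
        have hcardFr : (Fr.erase S).card = Fr.card - 1 := Finset.card_erase_of_mem hSFr
        have hFrpos : 1 ≤ Fr.card := Finset.card_pos.mpr ⟨S, hSFr⟩
        omega

theorem gapLem (k : Fin m → ℕ) (hk : ∀ j, 2 ≤ k j) (u w : Fin m → ℕ)
    (huw : ∀ j, u j ≤ w j) (hwk : ∀ j, w j ≤ k j)
    (hlt : ∃ j, u j < w j)
    (hw : (∀ j, w j = k j) ∨ ¬ (∀ j, w j = 0 ∨ w j = k j))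
    (F : Finset (Finset (Fin m)))
    (hlam : laminar F) (hne : ∀ Y ∈ F, Y.Nonempty)
    (hproper : ∀ Y ∈ F, Y ≠ Finset.univ)
    (hwfull : ∀ Y ∈ F, ∀ j ∈ Y, w j = k j)
    (htype : ∀ Y ∈ F, (∀ j ∈ Y, u j = 0) ∨
      ((∀ j ∉ Y, u j = 0) ∧ ¬ (∀ j, u j = 0 ∨ u j = k j))) :
    F.card + 1 ≤ ∑ j, (w j - u j) := by
  classical
  set F1 := F.filter (fun Y => ¬ ∀ j ∈ Y, u j = 0) with hF1def
  by_cases hF10 : F1 = ∅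
  · have huz : ∀ Y ∈ F, ∀ j ∈ Y, u j = 0 := by
      intro Y hY
      by_contra hc
      have : Y ∈ F1 := mem_filter.mpr ⟨hY, hc⟩
      rw [hF10] at this
      exact absurd this (notMem_empty _)
    rcases F.eq_empty_or_nonempty with hF0 | hFne
    · rw [hF0]
      simp only [Finset.card_empty, zero_add]
      obtain ⟨j, hj⟩ := hlt
      calc 1 ≤ w j - u j := by omega
      _ ≤ ∑ j, (w j - u j) :=
        Finset.single_le_sum (f := fun j => w j - u j) (fun _ _ => Nat.zero_le _) (Finset.mem_univ j)
    · have hlamb := lamb k hk F hlam hne hFne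
      have hXV : ∑ j ∈ F.sup id, k j = ∑ j ∈ F.sup id, (w j - u j) := by
        apply Finset.sum_congr rfl
        intro j hj
        obtain ⟨Y, hY, hjY⟩ := Finset.mem_sup.mp hj
        rw [huz Y hY j hjY, hwfull Y hY j hjY]
        omega
      calc F.card + 1 ≤ ∑ j ∈ F.sup id, k j := hlamb
      _ = ∑ j ∈ F.sup id, (w j - u j) := hXV
      _ ≤ ∑ j, (w j - u j) :=
        Finset.sum_le_sum_of_subset (Finset.subset_univ _)
  · obtain ⟨S, hS1, hSmax, hScard⟩ := exists_submax F1 (nonempty_of_ne_empty hF10)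
    have hSF : S ∈ F := (mem_filter.mp hS1).1
    have hSnu : ¬ ∀ j ∈ S, u j = 0 := (mem_filter.mp hS1).2
    obtain ⟨hsuppS, hNE⟩ := (htype S hSF).resolve_left hSnu
    obtain ⟨j1, hj1S, hj1u⟩ : ∃ j ∈ S, u j ≠ 0 := by
      by_contra hc
      push_neg at hc
      exact hSnu hc
    set Fi := F.filter (fun Y => Y ⊆ S) with hFidef
    set Fr := F.filter (fun Y => ¬ Y ⊆ S) with hFrdef
    have hcards : Fi.card + Fr.card = F.card :=
      Finset.card_filter_add_card_filter_not _
    have rec1 : Fi.card ≤ ∑ j ∈ S, (w j - u j) :=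
      lamA k hk u w huw hwk hNE Fi S (mem_filter.mpr ⟨hSF, subset_rfl⟩)
        (fun Y hY => (mem_filter.mp hY).2)
        (laminar_subset hlam (Finset.filter_subset _ _))
        (fun Y hY => hne Y (mem_filter.mp hY).1)
        (fun Y hY => hwfull Y (mem_filter.mp hY).1)
        (fun Y hY => ((htype Y (mem_filter.mp hY).1).imp (fun h => h) (fun h => h.1)))
        hSnu
    have hFr' : ∀ Y ∈ Fr, (∀ j ∈ Y, u j = 0) ∧ Disjoint Y S := by
      intro Y hY
      have hYF : Y ∈ F := (mem_filter.mp hY).1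
      have hYnS : ¬ Y ⊆ S := (mem_filter.mp hY).2
      have huzY : ∀ j ∈ Y, u j = 0 := by
        by_contra hc
        have hYF1 : Y ∈ F1 := mem_filter.mpr ⟨hYF, hc⟩
        rcases hlam Y hYF S hSF with h | h | h
        · exact hYnS h
        · exact hYnS (subset_of_eq (hSmax Y hYF1 h))
        · have hsuppY : ∀ j, j ∉ Y → u j = 0 := ((htype Y hYF).resolve_left hc).1
          have hj1Y : j1 ∈ Y := by
            by_contra hn
            exact hj1u (hsuppY j1 hn)
          exact (Finset.disjoint_left.mp h hj1Y) hj1S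
      refine ⟨huzY, ?_⟩
      rcases hlam Y hYF S hSF with h | h | h
      · exact absurd h hYnS
      · exact absurd (huzY j1 (h hj1S)) hj1u
      · exact h
    set V := Fr.sup id with hVdef
    have hVprop : V ⊆ Sᶜ := by
      intro j hj
      obtain ⟨Y, hY, hjY⟩ := Finset.mem_sup.mp hj
      rw [Finset.mem_compl]
      intro hjS
      exact (Finset.disjoint_left.mp (hFr' Y hY).2) hjY hjS
    have hsplit : (∑ j ∈ S, (w j - u j)) + ∑ j ∈ Sᶜ, (w j - u j) =
        ∑ j, (w j - u j) := Finset.sum_add_sum_compl S (fun j => w j - u j)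
    rcases Fr.eq_empty_or_nonempty with hE | hEne
    · -- need one unit outside S
      have hunit : 1 ≤ ∑ j ∈ Sᶜ, (w j - u j) := by
        by_contra hc
        push_neg at hc
        have hzero : ∀ j ∈ Sᶜ, w j - u j = 0 := by
          intro j hj
          have h5 : w j - u j ≤ ∑ j ∈ Sᶜ, (w j - u j) :=
            Finset.single_le_sum (f := fun j => w j - u j)
              (fun _ _ => Nat.zero_le _) hj
          omega
        have hw0 : ∀ j, j ∉ S → w j = 0 := by
          intro j hj
          have h1 := hzero j (Finset.mem_compl.mpr hj)
          have h2 := hsuppS j hj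
          have h3 := huw j
          omega
        obtain ⟨j2, hj2⟩ : ∃ j2, j2 ∉ S := by
          by_contra hc2
          push_neg at hc2
          exact (hproper S hSF) (Finset.eq_univ_iff_forall.mpr hc2)
        rcases hw with hwtop | hwNE
        · have := hwtop j2
          have := hw0 j2 hj2
          have := hk j2
          omega
        · apply hwNE
          intro j
          by_cases hjS : j ∈ S
          · exact Or.inr (hwfull S hSF j hjS)
          · exact Or.inl (hw0 j hjS)
      have hFr0 : Fr.card = 0 := by rw [hE]; rfl
      omega
    · have hlamb := lamb k hk Fr
        (laminar_subset hlam (Finset.filter_subset _ _))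
        (fun Y hY => hne Y (mem_filter.mp hY).1) hEne
      rw [← hVdef] at hlamb
      have hXV : ∑ j ∈ V, k j = ∑ j ∈ V, (w j - u j) := by
        apply Finset.sum_congr rfl
        intro j hj
        obtain ⟨Y, hY, hjY⟩ := Finset.mem_sup.mp hj
        rw [(hFr' Y hY).1 j hjY, hwfull Y (mem_filter.mp hY).1 j hjY]
        omega
      have hmono : ∑ j ∈ V, (w j - u j) ≤ ∑ j ∈ Sᶜ, (w j - u j) :=
        Finset.sum_le_sum_of_subset hVprop
      omega

end Stmt18Comb2


section Stmt18Bridge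

open Finset

variable {m : ℕ} {d : Fin m → ℕ}

/-- support of a tuple -/
def suppF (v : ∀ i, Fin (d i + 2)) : Finset (Fin m) :=
  Finset.univ.filter (fun i => v i ≠ 0)

lemma mem_suppF {v : ∀ i, Fin (d i + 2)} {i : Fin m} : i ∈ suppF v ↔ v i ≠ 0 := by
  simp [suppF]

lemma suppF_last {v : ∀ i, Fin (d i + 2)} (hext : SExt v) {i : Fin m} :
    i ∈ suppF v ↔ v i = Fin.last _ := by
  rw [mem_suppF]
  constructor
  · intro h; exact (hext i).resolve_left h
  · intro h; rw [h]; exact slast_ne_zero i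

lemma not_mem_suppF {v : ∀ i, Fin (d i + 2)} {i : Fin m} :
    i ∉ suppF v ↔ v i = 0 := by
  rw [mem_suppF]; tauto

lemma le_ext_iff {E v : ∀ i, Fin (d i + 2)} (hext : SExt E) :
    v ≤ E ↔ ∀ i ∉ suppF E, v i = 0 := by
  constructor
  · intro h i hi
    have := h i
    rw [not_mem_suppF.mp hi] at this
    exact le_antisymm this (Fin.zero_le _)
  · intro h i
    by_cases hi : i ∈ suppF E
    · rw [(suppF_last hext).mp hi]; exact Fin.le_last _
    · rw [h i hi]; exact Fin.zero_le _

lemma ext_le_iff {E v : ∀ i, Fin (d i + 2)} (hext : SExt E) :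
    E ≤ v ↔ ∀ i ∈ suppF E, v i = Fin.last _ := by
  constructor
  · intro h i hi
    have := h i
    rw [(suppF_last hext).mp hi] at this
    exact le_antisymm (Fin.le_last _) this
  · intro h i
    by_cases hi : i ∈ suppF E
    · rw [h i hi, (suppF_last hext).mp hi]
    · rw [not_mem_suppF.mp hi]; exact Fin.zero_le _

lemma suppF_scpl {E : ∀ i, Fin (d i + 2)} (hext : SExt E) :
    suppF (scpl E) = (suppF E)ᶜ := by
  ext i
  rw [Finset.mem_compl, mem_suppF, not_mem_suppF]
  constructor
  · intro h
    by_contra hc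
    exact h (scpl_app_eq_zero.mpr ((hext i).resolve_left hc))
  · intro h hc
    rw [scpl_app_eq_zero] at hc
    rw [h] at hc
    exact slast_ne_zero i hc.symm

lemma ext_eq_of_suppF {E E' : ∀ i, Fin (d i + 2)} (hE : SExt E) (hE' : SExt E')
    (h : suppF E = suppF E') : E = E' := by
  funext i
  by_cases hi : i ∈ suppF E
  · rw [(suppF_last hE).mp hi, ((suppF_last hE').mp (h ▸ hi)).symm]
  · rw [not_mem_suppF.mp hi, (not_mem_suppF.mp (fun hh => hi (h ▸ hh)))]

lemma suppF_nonempty {v : ∀ i, Fin (d i + 2)} (h : v ≠ ⊥) : (suppF v).Nonempty := by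
  obtain ⟨i, hi⟩ := sne_bot_iff.mp h
  exact ⟨i, mem_suppF.mpr hi⟩

lemma suppF_ne_univ {E : ∀ i, Fin (d i + 2)} (hext : SExt E) (h : E ≠ ⊤) :
    suppF E ≠ Finset.univ := by
  obtain ⟨i, hi⟩ := sne_top_iff.mp h
  intro hu
  exact hi ((suppF_last hext).mp (hu ▸ Finset.mem_univ i))

lemma compl_nonempty_of_ne_univ {A : Finset (Fin m)} (h : A ≠ Finset.univ) :
    Aᶜ.Nonempty := by
  by_contra hc
  rw [Finset.not_nonempty_iff_eq_empty] at hc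
  apply h
  rw [Finset.eq_univ_iff_forall]
  intro i
  by_contra hi
  have : i ∈ Aᶜ := Finset.mem_compl.mpr hi
  rw [hc] at this
  exact absurd this (notMem_empty _)

lemma sext_iff_nat {v : ∀ i, Fin (d i + 2)} :
    SExt v ↔ ∀ j, (v j : ℕ) = 0 ∨ (v j : ℕ) = d j + 1 := by
  unfold SExt
  apply forall_congr'
  intro j
  rw [Fin.ext_iff, Fin.ext_iff]
  simp [Fin.val_last]

/-- compatibility of subsets (split compatibility) -/
def compatF (A B : Finset (Fin m)) : Prop :=
  A ⊆ B ∨ B ⊆ A ∨ (∀ j ∈ A, j ∉ B) ∨ (∀ j, j ∈ A ∨ j ∈ B)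

lemma compatF_symm {A B : Finset (Fin m)} (h : compatF A B) : compatF B A := by
  rcases h with h | h | h | h
  · exact Or.inr (Or.inl h)
  · exact Or.inl h
  · exact Or.inr (Or.inr (Or.inl (fun j hj hj' => h j hj' hj)))
  · exact Or.inr (Or.inr (Or.inr (fun j => (h j).symm)))

lemma compatF_compl_left {A B : Finset (Fin m)} (h : compatF A B) : compatF Aᶜ B := by
  rcases h with h | h | h | h
  · right; right; right
    intro j
    by_cases hj : j ∈ A
    · exact Or.inr (h hj)
    · exact Or.inl (Finset.mem_compl.mpr hj)
  · right; right; left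
    intro j hj hjB
    exact (Finset.mem_compl.mp hj) (h hjB)
  · right; left
    intro j hj
    exact Finset.mem_compl.mpr (fun hjA => h j hjA hj)
  · left
    intro j hj
    exact (h j).resolve_left (Finset.mem_compl.mp hj)

lemma downclosed_iff {r : ℕ} (D : Finset (Fin r))
    (hD : ∀ a b : Fin r, a ≤ b → b ∈ D → a ∈ D) (a : Fin r) :
    a ∈ D ↔ (a : ℕ) < D.card := by
  constructor
  · intro ha
    have hsub : Finset.Iic a ⊆ D := fun x hx => hD x a (Finset.mem_Iic.mp hx) ha
    have hle := Finset.card_le_card hsub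
    rw [Fin.card_Iic] at hle
    omega
  · intro ha
    by_contra hn
    have hsub : D ⊆ Finset.Iio a := by
      intro x hx
      rw [Finset.mem_Iio]
      by_contra hxa
      exact hn (hD a x (le_of_not_gt hxa) hx)
    have hle := Finset.card_le_card hsub
    rw [Fin.card_Iio] at hle
    omega

lemma tele_sum (f : ℕ → ℕ) : ∀ n, (∀ c, c < n → f c ≤ f (c+1)) →
    (∑ c ∈ Finset.range n, (f (c+1) - f c)) + f 0 = f n := by
  intro n
  induction n with
  | zero => simp
  | succ n ih =>
    intro h
    have h1 := ih (fun c hc => h c (by omega))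
    rw [Finset.sum_range_succ]
    have h2 := h n (by omega)
    omega

lemma sum_sub_sum {m' : ℕ} {a b : Fin m' → ℕ} (h : ∀ j, b j ≤ a j) :
    ∑ j, (a j - b j) = (∑ j, a j) - (∑ j, b j) := by
  have h1 : (∑ j, (a j - b j)) + ∑ j, b j = ∑ j, a j := by
    rw [← Finset.sum_add_distrib]
    apply Finset.sum_congr rfl
    intro j _
    have := h j
    omega
  have h2 : (∑ j, b j) ≤ ∑ j, a j := Finset.sum_le_sum (fun j _ => h j)
  omega

end Stmt18Bridge


section Stmt18Upper

open SimpleGraph Finset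

variable {m : ℕ} {d : Fin m → ℕ}

lemma fiber_bound (hm2 : 2 ≤ m) (hd1 : ∀ i, 1 ≤ d i) {u w : ∀ i, Fin (d i + 2)}
    (huw : u < w) (hu : u = ⊥ ∨ ¬ SExt u) (hwna : w = ⊤ ∨ ¬ SExt w)
    {G : Finset (ChainVert d)}
    (hGxt : ∀ J ∈ G, SExt J.1)
    (hlow : ∀ J ∈ G, u ≤ J.1 ∨ u ≤ scpl J.1)
    (hup : ∀ J ∈ G, J.1 ≤ w ∨ scpl J.1 ≤ w)
    (hcompat : ∀ J ∈ G, ∀ J' ∈ G, J ≠ J' → scomp J'.1 J.1 ∨ scomp J'.1 (scpl J.1))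
    (hncpl : ∀ J ∈ G, ∀ J' ∈ G, J'.1 ≠ scpl J.1) :
    G.card + 1 ≤ ∑ j, ((w j : ℕ) - (u j : ℕ)) := by
  classical
  set k : Fin m → ℕ := fun j => d j + 1 with hkdef
  set i0 : Fin m := ⟨0, by omega⟩ with hi0def
  set A : ChainVert d → Finset (Fin m) := fun J => suppF J.1 with hAdef
  set Y : ChainVert d → Finset (Fin m) := fun J =>
    if u = ⊥ ∧ w = ⊤ then (if i0 ∈ A J then (A J)ᶜ else A J)
    else if w = ⊤ then (if u ≤ J.1 then (A J)ᶜ else A J)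
    else (if J.1 ≤ w then A J else (A J)ᶜ) with hYdef
  have hYapp : ∀ J, Y J =
      if u = ⊥ ∧ w = ⊤ then (if i0 ∈ A J then (A J)ᶜ else A J)
      else if w = ⊤ then (if u ≤ J.1 then (A J)ᶜ else A J)
      else (if J.1 ≤ w then A J else (A J)ᶜ) := fun J => by rw [hYdef]
  have hside : ∀ J, Y J = A J ∨ Y J = (A J)ᶜ := by
    intro J
    rw [hYapp J]
    split_ifs <;> first | exact Or.inl rfl | exact Or.inr rfl
  have hAne : ∀ J ∈ G, (A J).Nonempty := fun J _ => suppF_nonempty J.2.1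
  have hAnu : ∀ J ∈ G, A J ≠ Finset.univ := fun J hJ => suppF_ne_univ (hGxt J hJ) J.2.2
  have hYne : ∀ J ∈ G, (Y J).Nonempty := by
    intro J hJ
    rcases hside J with h | h <;> rw [h]
    · exact hAne J hJ
    · exact compl_nonempty_of_ne_univ (hAnu J hJ)
  have hYnu : ∀ J ∈ G, Y J ≠ Finset.univ := by
    intro J hJ
    rcases hside J with h | h <;> rw [h]
    · exact hAnu J hJ
    · intro hc
      obtain ⟨i, hi⟩ := hAne J hJ
      have h2 : i ∈ (A J)ᶜ := hc ▸ Finset.mem_univ i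
      exact (Finset.mem_compl.mp h2) hi
  -- key per-element facts
  have hkey : ∀ J ∈ G, (∀ i ∈ Y J, w i = Fin.last _) ∧
      ((∀ i ∈ Y J, u i = 0) ∨ ((∀ i ∉ Y J, u i = 0) ∧ u ≠ ⊥ ∧ w ≠ ⊤)) := by
    intro J hJ
    have hJext := hGxt J hJ
    have hlowJ := hlow J hJ
    have hupJ := hup J hJ
    rw [hYapp J]
    by_cases hbt : u = ⊥ ∧ w = ⊤
    · rw [if_pos hbt]
      constructor
      · intro i _
        rw [hbt.2]
        exact stop_app i
      · left
        intro i _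
        rw [hbt.1]
        exact sbot_app i
    · rw [if_neg hbt]
      by_cases hwt : w = ⊤
      · rw [if_pos hwt]
        constructor
        · intro i _
          rw [hwt]
          exact stop_app i
        · left
          by_cases huJ : u ≤ J.1
          · rw [if_pos huJ]
            intro i hi
            exact (le_ext_iff hJext).mp huJ i (Finset.mem_compl.mp hi)
          · rw [if_neg huJ]
            have husc : u ≤ scpl J.1 := hlowJ.resolve_left huJ
            intro i hi
            exact (le_ext_iff (sext_scpl hJext)).mp husc i (by
              rw [suppF_scpl hJext]
              exact fun hc => (Finset.mem_compl.mp hc) hi)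
      · rw [if_neg hwt]
        constructor
        · by_cases hJw : J.1 ≤ w
          · rw [if_pos hJw]
            intro i hi
            exact (ext_le_iff hJext).mp hJw i hi
          · rw [if_neg hJw]
            have hscw : scpl J.1 ≤ w := hupJ.resolve_left hJw
            intro i hi
            exact (ext_le_iff (sext_scpl hJext)).mp hscw i (by
              rw [suppF_scpl hJext]; exact hi)
        · by_cases hub : u = ⊥
          · left
            intro i _
            rw [hub]
            exact sbot_app i
          · by_cases huJ : u ≤ J.1
            · by_cases hJw : J.1 ≤ w
              · rw [if_pos hJw]
                right
                refine ⟨?_, hub, hwt⟩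
                intro i hi
                exact (le_ext_iff hJext).mp huJ i hi
              · rw [if_neg hJw]
                left
                intro i hi
                exact (le_ext_iff hJext).mp huJ i (Finset.mem_compl.mp hi)
            · have husc : u ≤ scpl J.1 := hlowJ.resolve_left huJ
              by_cases hJw : J.1 ≤ w
              · rw [if_pos hJw]
                left
                intro i hi
                exact (le_ext_iff (sext_scpl hJext)).mp husc i (by
                  rw [suppF_scpl hJext]
                  exact fun hc => (Finset.mem_compl.mp hc) hi)
              · rw [if_neg hJw]
                right
                refine ⟨?_, hub, hwt⟩
                intro i hi
                exact (le_ext_iff (sext_scpl hJext)).mp husc i (by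
                  rw [suppF_scpl hJext]
                  exact hi)
  -- injectivity
  have hinj : ∀ J ∈ G, ∀ J' ∈ G, Y J = Y J' → J = J' := by
    intro J hJ J' hJ' hYY
    have hJe := hGxt J hJ
    have hJ'e := hGxt J' hJ'
    have hsupp_eq : A J = A J' ∨ A J = (A J')ᶜ := by
      rcases hside J with h1 | h1 <;> rcases hside J' with h2 | h2
      · left; rw [← h1, ← h2, hYY]
      · right; rw [← h1, ← h2, hYY]
      · right
        calc A J = ((A J)ᶜ)ᶜ := (compl_compl _).symm
        _ = (Y J)ᶜ := by rw [h1]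
        _ = (Y J')ᶜ := by rw [hYY]
        _ = (A J')ᶜ := by rw [h2]
      · left
        calc A J = ((A J)ᶜ)ᶜ := (compl_compl _).symm
        _ = (Y J)ᶜ := by rw [h1]
        _ = (Y J')ᶜ := by rw [hYY]
        _ = ((A J')ᶜ)ᶜ := by rw [h2]
        _ = A J' := compl_compl _
    rcases hsupp_eq with h | h
    · exact Subtype.ext (ext_eq_of_suppF hJe hJ'e h)
    · exfalso
      have heq : J.1 = scpl J'.1 := by
        apply ext_eq_of_suppF hJe (sext_scpl hJ'e)
        rw [suppF_scpl hJ'e]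
        exact h
      exact hncpl J' hJ' J hJ heq
  -- compatibility of supports
  have hcompat2 : ∀ J ∈ G, ∀ J' ∈ G, J ≠ J' → compatF (A J') (A J) := by
    intro J hJ J' hJ' hne
    have hJe := hGxt J hJ
    rcases hcompat J hJ J' hJ' hne with (h | h) | (h | h)
    · -- J' ≤ J
      left
      intro i hi
      have hi' : J'.1 i ≠ 0 := mem_suppF.mp hi
      apply mem_suppF.mpr
      intro hc
      have h1 := h i
      rw [hc] at h1
      exact hi' (le_antisymm h1 (Fin.zero_le _))
    · -- J ≤ J'
      right; left
      intro i hi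
      have hi' : J.1 i ≠ 0 := mem_suppF.mp hi
      apply mem_suppF.mpr
      intro hc
      have h1 := h i
      rw [hc] at h1
      exact hi' (le_antisymm h1 (Fin.zero_le _))
    · -- J' ≤ scpl J : disjoint
      right; right; left
      intro i hi hiJ
      have hi' : J'.1 i ≠ 0 := mem_suppF.mp hi
      have hiJ' : J.1 i ≠ 0 := mem_suppF.mp hiJ
      have h1 := h i
      have h2 : J.1 i = Fin.last _ := (hJe i).resolve_left hiJ'
      rw [scpl_app_eq_zero.mpr h2] at h1
      exact hi' (le_antisymm h1 (Fin.zero_le _))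
    · -- scpl J ≤ J' : covering
      right; right; right
      intro i
      by_cases hiJ : i ∈ A J
      · exact Or.inr hiJ
      · left
        apply mem_suppF.mpr
        have hiJ0 : J.1 i = 0 := not_mem_suppF.mp hiJ
        have h1 := h i
        rw [scpl_app_eq_last.mpr hiJ0] at h1
        intro hc
        rw [hc] at h1
        exact slast_ne_zero i (le_antisymm h1 (Fin.zero_le _))
  have hYcompat : ∀ J ∈ G, ∀ J' ∈ G, J ≠ J' → compatF (Y J) (Y J') := by
    intro J hJ J' hJ' hne
    have h0 : compatF (A J) (A J') := compatF_symm (hcompat2 J hJ J' hJ' hne)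
    have h1 : compatF (Y J) (A J') := by
      rcases hside J with h | h <;> rw [h]
      · exact h0
      · exact compatF_compl_left h0
    have h2 : compatF (A J') (Y J) := compatF_symm h1
    have h3 : compatF (Y J') (Y J) := by
      rcases hside J' with h | h <;> rw [h]
      · exact h2
      · exact compatF_compl_left h2
    exact compatF_symm h3
  -- no covering pairs
  have hnocover : ∀ J ∈ G, ∀ J' ∈ G, ¬ (∀ j, j ∈ Y J ∨ j ∈ Y J') := by
    intro J hJ J' hJ' hcov
    have hwtop : w = ⊤ := by
      funext i
      rw [stop_app]
      rcases hcov i with h | h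
      · exact (hkey J hJ).1 i h
      · exact (hkey J' hJ').1 i h
    by_cases hbt : u = ⊥
    · have hni0 : ∀ Jx, Jx ∈ G → i0 ∉ Y Jx := by
        intro Jx hJx
        rw [hYapp Jx, if_pos ⟨hbt, hwtop⟩]
        by_cases h : i0 ∈ A Jx
        · rw [if_pos h]
          exact fun hc => (Finset.mem_compl.mp hc) h
        · rw [if_neg h]
          exact h
      rcases hcov i0 with h | h
      · exact hni0 J hJ h
      · exact hni0 J' hJ' h
    · apply hbt
      funext i
      rw [sbot_app]
      have hKJ := ((hkey J hJ).2.resolve_right (fun hh => hh.2.2 hwtop))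
      have hKJ' := ((hkey J' hJ').2.resolve_right (fun hh => hh.2.2 hwtop))
      rcases hcov i with h | h
      · exact hKJ i h
      · exact hKJ' i h
  -- the image family
  set F : Finset (Finset (Fin m)) := G.image Y with hFdef
  have hcardF : F.card = G.card := by
    rw [hFdef]
    apply Finset.card_image_of_injOn
    intro a ha b hb hab
    exact hinj a (Finset.mem_coe.mp ha) b (Finset.mem_coe.mp hb) hab
  have hlamF : laminar F := by
    intro Y1 hY1 Y2 hY2
    obtain ⟨J, hJ, rfl⟩ := Finset.mem_image.mp hY1
    obtain ⟨J', hJ', rfl⟩ := Finset.mem_image.mp hY2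
    by_cases hJJ : J = J'
    · subst hJJ
      exact Or.inl subset_rfl
    · rcases hYcompat J hJ J' hJ' hJJ with h | h | h | h
      · exact Or.inl h
      · exact Or.inr (Or.inl h)
      · exact Or.inr (Or.inr (Finset.disjoint_left.mpr h))
      · exact absurd h (hnocover J hJ J' hJ')
  -- apply gapLem
  have hval_top : ∀ j, ((⊤ : ∀ i, Fin (d i + 2)) j : ℕ) = d j + 1 := by
    intro j
    rw [stop_app, Fin.val_last]
  have hk2 : ∀ j, 2 ≤ k j := by
    intro j
    show 2 ≤ d j + 1
    have := hd1 j
    omega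
  have huw' : ∀ j, (u j : ℕ) ≤ (w j : ℕ) := fun j => huw.le j
  have hwk' : ∀ j, (w j : ℕ) ≤ k j := by
    intro j
    show (w j : ℕ) ≤ d j + 1
    have := (w j).isLt
    omega
  have hlt' : ∃ j, (u j : ℕ) < (w j : ℕ) := by
    obtain ⟨j, hj⟩ := exists_lt_coord huw
    exact ⟨j, hj⟩
  have hw' : (∀ j, (w j : ℕ) = k j) ∨ ¬ (∀ j, (w j : ℕ) = 0 ∨ (w j : ℕ) = k j) := by
    rcases hwna with h | h
    · left
      intro j
      rw [h, hval_top j]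
    · right
      intro hc
      apply h
      rw [sext_iff_nat]
      intro j
      rcases hc j with h' | h'
      · exact Or.inl h'
      · right
        rw [h']
  have main := gapLem k hk2 (fun j => (u j : ℕ)) (fun j => (w j : ℕ)) huw' hwk' hlt' hw' F
    hlamF
    (by
      intro Z hZ
      obtain ⟨J, hJ, rfl⟩ := Finset.mem_image.mp hZ
      exact hYne J hJ)
    (by
      intro Z hZ
      obtain ⟨J, hJ, rfl⟩ := Finset.mem_image.mp hZ
      exact hYnu J hJ)
    (by
      intro Z hZ j hj
      obtain ⟨J, hJ, rfl⟩ := Finset.mem_image.mp hZ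
      show (w j : ℕ) = k j
      rw [(hkey J hJ).1 j hj, Fin.val_last])
    (by
      intro Z hZ
      obtain ⟨J, hJ, rfl⟩ := Finset.mem_image.mp hZ
      rcases (hkey J hJ).2 with h | ⟨h1, h2, h3⟩
      · left
        intro j hj
        show (u j : ℕ) = 0
        exact congrArg Fin.val (h j hj)
      · right
        constructor
        · intro j hj
          show (u j : ℕ) = 0
          exact congrArg Fin.val (h1 j hj)
        · intro hc
          rcases hu with h' | h'
          · exact h2 h'
          · apply h'
            rw [sext_iff_nat]
            intro j
            rcases hc j with hcc | hcc
            · exact Or.inl hcc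
            · exact Or.inr (hcc.trans rfl))
  rw [hcardF] at main
  exact main

end Stmt18Upper


section Stmt18Upper2

open SimpleGraph Finset

variable {m : ℕ} {d : Fin m → ℕ}

theorem upper_card (hm2 : 2 ≤ m) (hd1 : ∀ i, 1 ≤ d i)
    (S : Finset (ChainVert d))
    (hind : IsIndepFinset (strongResolvingGraph (chainGraph d)) S) :
    S.card ≤ (∑ i, d i) + m - 1 := by
  classical
  have hmmd : ∀ u ∈ S, ∀ v ∈ S, u ≠ v → ¬ MMD (chainGraph d) u v :=
    fun u hu v hv hne => hind u hu v hv hne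
  set S1 := S.filter (fun I : ChainVert d => SExt I.1) with hS1def
  set S0 := S.filter (fun I : ChainVert d => ¬ SExt I.1) with hS0def
  have hcards : S1.card + S0.card = S.card :=
    Finset.card_filter_add_card_filter_not _
  have hchain : ∀ I, I ∈ S0 → ∀ J, J ∈ S0 → I ≠ J → scomp I.1 J.1 := by
    intro I hI J hJ hne
    by_contra hnc
    exact hmmd I (mem_filter.mp hI).1 J (mem_filter.mp hJ).1 hne
      (mmd_of_nonext hd1 (mem_filter.mp hI).2 (mem_filter.mp hJ).2 hnc)
  have hext1 : ∀ J ∈ S1, ∀ v ∈ S, v ≠ J →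
      scomp v.1 J.1 ∨ scomp v.1 (scpl J.1) := by
    intro J hJ v hv hne
    by_contra hnc
    push_neg at hnc
    exact hmmd v hv J (mem_filter.mp hJ).1 hne
      (mmd_of_ext hd1 (mem_filter.mp hJ).2 hnc.1 hnc.2)
  have hcpl : ∀ J ∈ S1, ∀ J' ∈ S1, J'.1 ≠ scpl J.1 := by
    intro J hJ J' hJ' h
    have hJext := (mem_filter.mp hJ).2
    have hne : J ≠ J' := by
      rw [vert_ne_iff]
      intro he
      exact sext_ne_scpl hJext J.2.1 (he.trans h)
    exact hmmd J (mem_filter.mp hJ).1 J' (mem_filter.mp hJ').1 hne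
      (mmd_cpair hd1 hJext h)
  set r := S0.card with hrdef
  letI : LinearOrder {x // x ∈ S0} := {
    le := fun a b => a.1.1 ≤ b.1.1
    le_refl := fun a => by
      show a.1.1 ≤ a.1.1
      exact le_refl _
    le_trans := fun a b c h1 h2 => by
      show a.1.1 ≤ c.1.1
      exact le_trans (show a.1.1 ≤ b.1.1 from h1) (show b.1.1 ≤ c.1.1 from h2)
    le_antisymm := fun a b h1 h2 => Subtype.ext (Subtype.ext
      (le_antisymm (show a.1.1 ≤ b.1.1 from h1) (show b.1.1 ≤ a.1.1 from h2)))
    le_total := fun a b => by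
      by_cases h : a = b
      · rw [h]
        exact Or.inl (show b.1.1 ≤ b.1.1 from le_refl _)
      · exact hchain a.1 a.2 b.1 b.2 (fun hh => h (Subtype.ext hh))
    toDecidableLE := fun a b => Classical.dec _ }
  have hcard0 : Fintype.card {x // x ∈ S0} = r := by rw [Fintype.card_coe]
  set e := monoEquivOfFin {x // x ∈ S0} hcard0 with hedef
  set z : ℕ → (∀ i, Fin (d i + 2)) := fun c =>
    if hc0 : c = 0 then ⊥ else if h : c ≤ r then ((e ⟨c - 1, by omega⟩ :
      {x // x ∈ S0}) : ChainVert d).1 else ⊤ with hzdef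
  have hz0 : z 0 = ⊥ := by rw [hzdef]; simp
  have hztop : ∀ c, r < c → z c = ⊤ := by
    intro c hc
    rw [hzdef]
    simp only
    rw [dif_neg (by omega : ¬ c = 0), dif_neg (by omega : ¬ c ≤ r)]
  have hzval : ∀ c (h1 : 1 ≤ c) (h2 : c ≤ r),
      z c = ((e ⟨c - 1, by omega⟩ : {x // x ∈ S0}) : ChainVert d).1 := by
    intro c h1 h2
    rw [hzdef]
    simp only
    rw [dif_neg (by omega : ¬ c = 0), dif_pos h2]
  have hzmem : ∀ c, 1 ≤ c → c ≤ r → ∃ I, I ∈ S0 ∧ z c = I.1 := by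
    intro c h1 h2
    exact ⟨(e ⟨c - 1, by omega⟩ : {x // x ∈ S0}).1,
      (e ⟨c - 1, by omega⟩ : {x // x ∈ S0}).2, hzval c h1 h2⟩
  have hznx : ∀ c, 1 ≤ c → c ≤ r → ¬ SExt (z c) ∧ z c ≠ ⊥ ∧ z c ≠ ⊤ := by
    intro c h1 h2
    obtain ⟨I, hI, hzc⟩ := hzmem c h1 h2
    rw [hzc]
    exact ⟨(mem_filter.mp hI).2, I.2.1, I.2.2⟩
  have hbotnetop : (⊥ : ∀ i, Fin (d i + 2)) ≠ ⊤ := by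
    intro h
    have := congrFun h ⟨0, by omega⟩
    rw [sbot_app, stop_app] at this
    exact slast_ne_zero _ this.symm
  have hzlt : ∀ c, c ≤ r → z c < z (c+1) := by
    intro c hc
    by_cases hc0 : c = 0
    · subst hc0
      rw [hz0]
      by_cases hr0 : r = 0
      · rw [hztop 1 (by omega)]
        exact lt_of_le_of_ne bot_le hbotnetop
      · obtain ⟨I, hI, hz1⟩ := hzmem 1 le_rfl (by omega)
        rw [hz1]
        exact lt_of_le_of_ne bot_le (Ne.symm I.2.1)
    · by_cases hcr : c + 1 ≤ r
      · have h1 := hzval c (by omega) hc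
        have h2 := hzval (c+1) (by omega) hcr
        rw [h1, h2]
        have hlt' : (⟨c - 1, by omega⟩ : Fin r) < ⟨c + 1 - 1, by omega⟩ := by
          rw [Fin.lt_def]
          simp only
          omega
        have hmono := e.strictMono hlt'
        rw [lt_iff_le_not_ge] at hmono
        exact lt_of_le_not_ge hmono.1 hmono.2
      · rw [hztop (c+1) (by omega)]
        obtain ⟨I, hI, hzc⟩ := hzmem c (by omega) hc
        rw [hzc]
        exact lt_of_le_of_ne le_top I.2.2
  have hzsent : ∀ c, c ≤ r → (z c = ⊥ ∨ ¬ SExt (z c)) := by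
    intro c hc
    by_cases h : c = 0
    · subst h
      exact Or.inl hz0
    · exact Or.inr (hznx c (by omega) hc).1
  have hzsent' : ∀ c, c ≤ r → (z (c+1) = ⊤ ∨ ¬ SExt (z (c+1))) := by
    intro c hc
    by_cases h : c + 1 ≤ r
    · exact Or.inr (hznx (c+1) (by omega) h).1
    · exact Or.inl (hztop _ (by omega))
  -- gap function
  set gap : ChainVert d → ℕ := fun J =>
    ((Finset.univ : Finset (Fin r)).filter (fun a =>
      ((e a : {x // x ∈ S0}) : ChainVert d).1 ≤ J.1 ∨
      ((e a : {x // x ∈ S0}) : ChainVert d).1 ≤ scpl J.1)).card with hgapdef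
  have hgap_le : ∀ J, gap J ≤ r := by
    intro J
    rw [hgapdef]
    calc ((Finset.univ : Finset (Fin r)).filter _).card
        ≤ (Finset.univ : Finset (Fin r)).card := Finset.card_filter_le _ _
    _ = r := by rw [Finset.card_univ, Fintype.card_fin]
  have hgap_iff : ∀ J, ∀ a : Fin r,
      (((e a : {x // x ∈ S0}) : ChainVert d).1 ≤ J.1 ∨
       ((e a : {x // x ∈ S0}) : ChainVert d).1 ≤ scpl J.1) ↔ (a : ℕ) < gap J := by
    intro J a
    have hD : ∀ a b : Fin r, a ≤ b →
        b ∈ (Finset.univ : Finset (Fin r)).filter (fun a =>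
          ((e a : {x // x ∈ S0}) : ChainVert d).1 ≤ J.1 ∨
          ((e a : {x // x ∈ S0}) : ChainVert d).1 ≤ scpl J.1) →
        a ∈ (Finset.univ : Finset (Fin r)).filter (fun a =>
          ((e a : {x // x ∈ S0}) : ChainVert d).1 ≤ J.1 ∨
          ((e a : {x // x ∈ S0}) : ChainVert d).1 ≤ scpl J.1) := by
      intro a b hab hb
      rw [mem_filter] at hb ⊢
      refine ⟨Finset.mem_univ _, ?_⟩
      have hmono : ((e a : {x // x ∈ S0}) : ChainVert d).1 ≤
          ((e b : {x // x ∈ S0}) : ChainVert d).1 := e.monotone hab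
      rcases hb.2 with h | h
      · exact Or.inl (le_trans hmono h)
      · exact Or.inr (le_trans hmono h)
    have hh := downclosed_iff _ hD a
    rw [mem_filter] at hh
    rw [hgapdef]
    constructor
    · intro h
      exact hh.mp ⟨Finset.mem_univ _, h⟩
    · intro h
      exact (hh.mpr h).2
  have hgap_low : ∀ J, z (gap J) ≤ J.1 ∨ z (gap J) ≤ scpl J.1 := by
    intro J
    by_cases h0 : gap J = 0
    · rw [h0, hz0]
      exact Or.inl bot_le
    · have h2 : gap J ≤ r := hgap_le J
      have h3 := hzval (gap J) (by omega) h2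
      rw [h3]
      have := (hgap_iff J ⟨gap J - 1, by omega⟩).mpr (by simp only; omega)
      exact this
  have hgap_up : ∀ J ∈ S1, J.1 ≤ z (gap J + 1) ∨ scpl J.1 ≤ z (gap J + 1) := by
    intro J hJ
    by_cases h : gap J + 1 ≤ r
    · have h3 := hzval (gap J + 1) (by omega) h
      rw [h3]
      set a : Fin r := ⟨gap J + 1 - 1, by omega⟩ with hadef
      have hvS0 : ((e a : {x // x ∈ S0}) : ChainVert d) ∈ S0 :=
        (e a : {x // x ∈ S0}).2
      have hvS : ((e a : {x // x ∈ S0}) : ChainVert d) ∈ S := (mem_filter.mp hvS0).1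
      have hvne : ((e a : {x // x ∈ S0}) : ChainVert d) ≠ J := by
        rw [vert_ne_iff]
        intro he
        apply (mem_filter.mp hvS0).2
        rw [he]
        exact (mem_filter.mp hJ).2
      have hnl : ¬ (((e a : {x // x ∈ S0}) : ChainVert d).1 ≤ J.1 ∨
          ((e a : {x // x ∈ S0}) : ChainVert d).1 ≤ scpl J.1) := by
        rw [hgap_iff J a]
        rw [hadef]
        simp only
        omega
      rcases hext1 J hJ _ hvS hvne with (h' | h') | (h' | h')
      · exact absurd (Or.inl h') hnl
      · exact Or.inl h'
      · exact absurd (Or.inr h') hnl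
      · exact Or.inr h'
    · rw [hztop _ (by omega)]
      exact Or.inl le_top
  -- fiberwise counting
  have hfib : S1.card = ∑ c ∈ Finset.range (r+1),
      (S1.filter (fun J => gap J = c)).card :=
    Finset.card_eq_sum_card_fiberwise (fun J _ => Finset.mem_range.mpr
      (by have := hgap_le J; omega))
  have hgapbound : ∀ c ∈ Finset.range (r+1),
      (S1.filter (fun J => gap J = c)).card + 1 ≤
        ∑ j, ((z (c+1) j : ℕ) - (z c j : ℕ)) := by
    intro c hcr
    rw [Finset.mem_range] at hcr
    have hcr' : c ≤ r := by omega
    apply fiber_bound hm2 hd1 (hzlt c hcr') (hzsent c hcr') (hzsent' c hcr')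
    · intro J hJ
      exact (mem_filter.mp (mem_filter.mp hJ).1).2
    · intro J hJ
      have hc : gap J = c := (mem_filter.mp hJ).2
      rw [← hc]
      exact hgap_low J
    · intro J hJ
      have hc : gap J = c := (mem_filter.mp hJ).2
      rw [← hc]
      exact hgap_up J (mem_filter.mp hJ).1
    · intro J hJ J' hJ' hne
      exact hext1 J (mem_filter.mp hJ).1 J'
        ((mem_filter.mp (mem_filter.mp hJ').1).1) (Ne.symm hne)
    · intro J hJ J' hJ'
      exact hcpl J (mem_filter.mp hJ).1 J' (mem_filter.mp hJ').1
  -- aggregate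
  have hsum := Finset.sum_le_sum hgapbound
  set f : ℕ → ℕ := fun c => ∑ j, ((z c) j : ℕ) with hfdef
  have hmonof : ∀ c, c < r + 1 → f c ≤ f (c+1) := by
    intro c hc
    apply Finset.sum_le_sum
    intro j _
    exact (hzlt c (by omega)).le j
  have hdiffeq : ∀ c ∈ Finset.range (r+1),
      (∑ j, ((z (c+1) j : ℕ) - (z c j : ℕ))) = f (c+1) - f c := by
    intro c hc
    rw [Finset.mem_range] at hc
    exact sum_sub_sum (fun j => (hzlt c (by omega)).le j)
  have htele := tele_sum f (r+1) hmonof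
  have hf0 : f 0 = 0 := by
    rw [hfdef]
    simp only [hz0]
    apply Finset.sum_eq_zero
    intro j _
    rw [sbot_app]
    rfl
  have hftop : f (r+1) = (∑ i, d i) + m := by
    rw [hfdef]
    simp only [hztop (r+1) (by omega)]
    have : ∀ j : Fin m, ((⊤ : ∀ i, Fin (d i + 2)) j : ℕ) = d j + 1 := by
      intro j
      rw [stop_app, Fin.val_last]
    rw [Finset.sum_congr rfl (fun j _ => this j)]
    rw [Finset.sum_add_distrib]
    simp
  have hLHS : ∑ c ∈ Finset.range (r+1),
      ((S1.filter (fun J => gap J = c)).card + 1) = S1.card + (r+1) := by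
    rw [Finset.sum_add_distrib, ← hfib]
    simp
  have hRHS : ∑ c ∈ Finset.range (r+1),
      (∑ j, ((z (c+1) j : ℕ) - (z c j : ℕ))) = (∑ i, d i) + m := by
    rw [Finset.sum_congr rfl hdiffeq]
    omega
  rw [hLHS, hRHS] at hsum
  omega

end Stmt18Upper2


theorem stmt18 (m : ℕ) (hm : 2 ≤ m) (d : Fin m → ℕ) (hd : ∀ i, 1 ≤ d i) :
    _root_.indepNum (strongResolvingGraph (chainGraph d)) = (∑ i, d i) + m - 1 := by
  classical
  have hmem : (∑ i, d i) + m - 1 ∈ {k | ∃ S : Finset (ChainVert d), S.card = k ∧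
      IsIndepFinset (strongResolvingGraph (chainGraph d)) S} :=
    ⟨lowS d hd hm, lowS_card d hd hm, lowS_indep d hd hm⟩
  have hub : ∀ x ∈ {k | ∃ S : Finset (ChainVert d), S.card = k ∧
      IsIndepFinset (strongResolvingGraph (chainGraph d)) S}, x ≤ (∑ i, d i) + m - 1 := by
    rintro x ⟨S, rfl, hS⟩
    exact upper_card hm hd S hS
  show sSup _ = _
  apply le_antisymm
  · exact csSup_le ⟨_, hmem⟩ hub
  · exact le_csSup ⟨_, hub⟩ hmem
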